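/- arXiv:1403.2270 — 5 statements merged into one kernel-verified Lean document; each statement's English description precedes it below -/
import Mathlib

section
/- Let P(z) = a_n ∏_{ν=1}^{n} (z − z_ν) be a complex polynomial of degree n ≥ 1 whose zeros satisfy |z_ν| ≥ k_ν ≥ 1 for 1 ≤ ν ≤ n. Set t₀ = 1 + n / (∑_{ν=1}^{n} 1/(k_ν − 1)) if k_ν > 1 for all ν, and t₀ = 1 if k_ν = 1 for some ν. Then for every complex number α with |α| ≥ 1, max_{|z|=1} |D_α P(z)| ≤ n · ((|α| + t₀)/(1 + t₀)) · max_{|z|=1} |P(z)|. -/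
open Polynomial


section AuxAzizRather
open Finset

private lemma abs_sq_eq (v : ℂ) : (‖v‖)^2 = v.re^2 + v.im^2 := by
  rw [Complex.sq_norm, Complex.normSq_apply]; ring

set_option maxHeartbeats 1000000 in
/-- Core complex-sum estimate. -/
private lemma sum_disk_bound {ι : Type*} [Fintype ι] (m : ℕ) (hm : 1 ≤ m)
    (hcard : Fintype.card ι = m)
    (k : ι → ℝ) (hk : ∀ ν, 1 ≤ k ν) (u : ι → ℂ)
    (hu : ∀ ν, (k ν ^ 2 - 1) * ‖u ν‖ ^ 2 + 2 * (u ν).re ≤ 1)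
    (t₀ : ℝ)
    (ht₀ : (∀ ν, 1 < k ν) → t₀ = 1 + (m : ℝ) / ∑ ν, 1 / (k ν - 1))
    (ht₀' : (∃ ν, k ν = 1) → t₀ = 1) :
    t₀ * ‖∑ ν, u ν‖ ≤ ‖(m : ℂ) - ∑ ν, u ν‖ := by
  have hne : Nonempty ι := by
    rw [← Fintype.card_pos_iff, hcard]; omega
  set S : ℂ := ∑ ν, u ν with hS
  have hSre : S.re = ∑ ν, (u ν).re := by rw [hS, Complex.re_sum]
  by_cases hall : ∀ ν, 1 < k ν
  · -- all k > 1 case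
    have ht : t₀ = 1 + (m : ℝ) / ∑ ν, 1 / (k ν - 1) := ht₀ hall
    have hkm1 : ∀ ν, (0:ℝ) < k ν - 1 := fun ν => by have := hall ν; linarith
    have hkp1 : ∀ ν, (0:ℝ) < k ν + 1 := fun ν => by have := hall ν; linarith
    have hK : ∀ ν, (0:ℝ) < k ν ^ 2 - 1 := fun ν => by nlinarith [hall ν]
    set s : ℝ := ∑ ν, 1 / (k ν - 1) with hs
    set p : ℝ := ∑ ν, 1 / (k ν + 1) with hp
    set q : ℝ := ∑ ν, 1 / (k ν ^ 2 - 1) with hq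
    set R : ℝ := ∑ ν, k ν / (k ν ^ 2 - 1) with hR
    have hspos : 0 < s := Finset.sum_pos (fun ν _ => one_div_pos.mpr (hkm1 ν)) univ_nonempty
    have hppos : 0 < p := Finset.sum_pos (fun ν _ => one_div_pos.mpr (hkp1 ν)) univ_nonempty
    -- identities
    have hRsp : R = (s + p) / 2 := by
      rw [hR, hs, hp, ← Finset.sum_add_distrib, Finset.sum_div]
      refine Finset.sum_congr rfl fun ν _ => ?_
      have h1 := (hkm1 ν).ne'; have h2 := (hkp1 ν).ne'; have h3 := (hK ν).ne'
      field_simp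
      ring
    have hqsp : q = (s - p) / 2 := by
      rw [hq, hs, hp, ← Finset.sum_sub_distrib, Finset.sum_div]
      refine Finset.sum_congr rfl fun ν _ => ?_
      have h1 := (hkm1 ν).ne'; have h2 := (hkp1 ν).ne'; have h3 := (hK ν).ne'
      field_simp
      ring
    -- Chebyshev
    have cheb : p * s ≤ (m : ℝ) * q := by
      have hmono : Monovary (fun ν => 1 / (k ν - 1)) (fun ν => 1 / (k ν + 1)) := by
        intro i j hij
        simp only at hij ⊢
        have hji : k j < k i := by
          by_contra hcon
          push_neg at hcon
          have : 1 / (k j + 1) ≤ 1 / (k i + 1) :=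
            one_div_le_one_div_of_le (hkp1 i) (by linarith)
          linarith
        exact one_div_le_one_div_of_le (hkm1 j) (by linarith)
      have hc := hmono.sum_mul_sum_le_card_mul_sum
      rw [hcard] at hc
      have hq' : (∑ ν, (1 / (k ν - 1)) * (1 / (k ν + 1))) = q := by
        rw [hq]
        refine Finset.sum_congr rfl fun ν _ => ?_
        have h1 := (hkm1 ν).ne'; have h2 := (hkp1 ν).ne'; have h3 := (hK ν).ne'
        field_simp
        ring
      rw [hq'] at hc
      calc p * s = s * p := by ring
        _ ≤ (m:ℝ) * q := hc
    set β : ℝ := s ^ 2 / (2 * s + m) with hβ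
    have h2sm : (0:ℝ) < 2 * s + m := by positivity
    have hβpos : 0 < β := by positivity
    -- per-term disk bound
    have hdisk : ∀ ν, ‖u ν + ((1 / (k ν ^ 2 - 1) : ℝ) : ℂ)‖ ≤ k ν / (k ν ^ 2 - 1) := by
      intro ν
      have hKν := hK ν
      have hkν : 0 < k ν := by linarith [hk ν]
      rw [← pow_le_pow_iff_left₀ (norm_nonneg _) (by positivity) two_ne_zero]
      have e1 : (‖u ν + ((1 / (k ν ^ 2 - 1) : ℝ) : ℂ)‖)^2
          = ((u ν).re + 1 / (k ν ^ 2 - 1))^2 + (u ν).im^2 := by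
        rw [abs_sq_eq]
        simp only [Complex.add_re, Complex.add_im, Complex.ofReal_re, Complex.ofReal_im, add_zero]
      have e2 := hu ν
      rw [abs_sq_eq] at e2
      rw [e1, div_pow, le_div_iff₀ (by positivity)]
      have expand : (((u ν).re + 1 / (k ν ^ 2 - 1))^2 + (u ν).im^2) * (k ν ^ 2 - 1)^2
          = ((u ν).re^2 + (u ν).im^2) * (k ν ^2 - 1)^2 + 2*(u ν).re*(k ν ^2 -1) + 1 := by
        field_simp
        ring
      rw [expand]
      nlinarith [mul_le_mul_of_nonneg_left e2 (le_of_lt hKν)]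
    -- triangle inequality for the sum
    have htri : ‖S + (q : ℂ)‖ ≤ R := by
      have hsum : S + (q:ℂ) = ∑ ν, (u ν + ((1 / (k ν ^ 2 - 1) : ℝ) : ℂ)) := by
        rw [hS, hq, Finset.sum_add_distrib]
        push_cast
        ring
      rw [hsum, hR]
      refine le_trans (norm_sum_le _ _) (Finset.sum_le_sum fun ν _ => hdisk ν)
    clear_value S s p q R β
    -- key real inequality
    have htβ : t₀ * β = (s^2 + m*s) / (2*s+m) := by
      rw [ht, hβ]; field_simp
    have hkey : R + |β - q| ≤ t₀ * β := by
      rcases le_total β q with hc | hc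
      · rw [abs_of_nonpos (by linarith)]
        have heq : R + -(β - q) = s - β := by rw [hRsp, hqsp]; ring
        rw [heq, htβ, hβ]
        have heq2 : s - s^2/(2*s+(m:ℝ)) = (s^2 + (m:ℝ)*s)/(2*s+(m:ℝ)) := by
          field_simp
          ring
        rw [heq2]
      · rw [abs_of_nonneg (by linarith)]
        have h1 : R - q = p := by rw [hRsp, hqsp]; ring
        have h2 : (t₀ - 1) * β = m * s / (2*s+m) := by
          rw [ht, hβ]; field_simp; ring
        have h3 : p ≤ m * s / (2*s+m) := by
          rw [le_div_iff₀ h2sm]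
          have hq2 : 2 * q = s - p := by rw [hqsp]; ring
          nlinarith [cheb, hq2]
        linarith [h1, h2, h3]
    have habs : ‖S + (β:ℂ)‖ ≤ t₀ * β := by
      have hsplit : S + (β:ℂ) = (S + (q:ℂ)) + ((β - q : ℝ) : ℂ) := by push_cast; ring
      rw [hsplit]
      refine le_trans (norm_add_le _ _) ?_
      rw [Complex.norm_real, Real.norm_eq_abs]
      linarith [htri, hkey]
    -- now conclude
    have ht1 : 1 < t₀ := by
      have hms : 0 < (m:ℝ)/s := by positivity
      rw [ht]; linarith
    have hβm : β * (t₀^2 - 1) = m := by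
      have hfac : t₀^2 - 1 = (t₀ - 1) * (t₀ + 1) := by ring
      have h1 : t₀ - 1 = (m:ℝ)/s := by rw [ht]; ring
      have h2 : t₀ + 1 = 2 + (m:ℝ)/s := by rw [ht]; ring
      rw [hfac, h1, h2, hβ]
      field_simp
    rw [← pow_le_pow_iff_left₀ (mul_nonneg (by linarith) (norm_nonneg _)) (norm_nonneg _) two_ne_zero]
    have e1 : (‖(m:ℂ) - S‖)^2 = ((m:ℝ) - S.re)^2 + S.im^2 := by
      rw [abs_sq_eq]
      simp only [Complex.sub_re, Complex.sub_im, Complex.natCast_re, Complex.natCast_im, zero_sub]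
      ring
    have e2 : (‖S + (β:ℂ)‖)^2 = (S.re + β)^2 + S.im^2 := by
      rw [abs_sq_eq]
      simp only [Complex.add_re, Complex.add_im, Complex.ofReal_re, Complex.ofReal_im, add_zero]
    have e3 : (‖S‖)^2 = S.re^2 + S.im^2 := abs_sq_eq S
    have habs2 : (S.re + β)^2 + S.im^2 ≤ (t₀*β)^2 := by
      rw [← e2]
      exact pow_le_pow_left₀ (norm_nonneg _) habs 2
    rw [mul_pow, e1, e3, ← hβm]
    nlinarith [mul_le_mul_of_nonneg_left habs2 (by nlinarith : (0:ℝ) ≤ t₀^2 - 1)]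
  · -- some k = 1
    push_neg at hall
    obtain ⟨ν₀, hν₀⟩ := hall
    have hk1 : k ν₀ = 1 := le_antisymm hν₀ (hk ν₀)
    have ht : t₀ = 1 := ht₀' ⟨ν₀, hk1⟩
    have hre : ∀ ν, (u ν).re ≤ 1/2 := by
      intro ν
      have h1 := hu ν
      have h2 : (0:ℝ) ≤ (k ν ^ 2 - 1) * ‖u ν‖ ^ 2 := by
        have h3 : (0:ℝ) ≤ k ν ^ 2 - 1 := by nlinarith [hk ν]
        positivity
      linarith
    have hSre2 : S.re ≤ m / 2 := by
      rw [hSre]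
      have := Finset.sum_le_sum (fun ν (_ : ν ∈ univ) => hre ν)
      rw [Finset.sum_const, Finset.card_univ, hcard, nsmul_eq_mul] at this
      linarith
    clear_value S
    rw [ht, one_mul, ← pow_le_pow_iff_left₀ (norm_nonneg _) (norm_nonneg _) two_ne_zero]
    have e1 : (‖(m:ℂ) - S‖)^2 = ((m:ℝ) - S.re)^2 + S.im^2 := by
      rw [abs_sq_eq]
      simp only [Complex.sub_re, Complex.sub_im, Complex.natCast_re, Complex.natCast_im, zero_sub]
      ring
    rw [e1, abs_sq_eq]
    have hm' : (1:ℝ) ≤ m := by exact_mod_cast hm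
    nlinarith [hSre2]


private lemma eval_deriv_prod {ι : Type*} [DecidableEq ι] (z : ι → ℂ) (w : ℂ) :
    ∀ s : Finset ι, (∀ i ∈ s, w - z i ≠ 0) →
      w * (derivative (∏ i ∈ s, (X - C (z i)))).eval w
        = (∏ i ∈ s, (w - z i)) * ∑ i ∈ s, w / (w - z i) := by
  intro s
  induction s using Finset.induction_on with
  | empty => intro _; simp
  | @insert a s' ha ih =>
    intro h
    have hza : w - z a ≠ 0 := h a (mem_insert_self a s')
    have ih' := ih fun i hi => h i (mem_insert_of_mem hi)
    rw [Finset.prod_insert ha, Finset.sum_insert ha, Finset.prod_insert ha,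
      derivative_mul, derivative_X_sub_C, one_mul, eval_add, eval_mul, eval_sub, eval_X, eval_C]
    have hQ : (∏ i ∈ s', (X - C (z i)) : ℂ[X]).eval w = ∏ i ∈ s', (w - z i) := by
      rw [eval_prod]
      exact Finset.prod_congr rfl fun i _ => by rw [eval_sub, eval_X, eval_C]
    rw [mul_add, hQ]
    have : w * ((w - z a) * (derivative (∏ i ∈ s', (X - C (z i)))).eval w)
        = (w - z a) * ((∏ i ∈ s', (w - z i)) * ∑ i ∈ s', w / (w - z i)) := by
      rw [← ih']; ring
    rw [this]
    field_simp

/-- Pointwise polar-derivative bound for factored polynomials. -/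
private lemma polar_pointwise {ι : Type*} [Fintype ι] [DecidableEq ι] (m : ℕ) (hm : 1 ≤ m)
    (hcard : Fintype.card ι = m) (b : ℂ) (z : ι → ℂ) (G : ℂ[X])
    (hG : G = C b * ∏ ν, (X - C (z ν)))
    (k : ι → ℝ) (hk1 : ∀ ν, 1 ≤ k ν) (hzk : ∀ ν, k ν ≤ ‖z ν‖)
    (t₀ : ℝ)
    (ht₀ : (∀ ν, 1 < k ν) → t₀ = 1 + (m : ℝ) / ∑ ν, 1 / (k ν - 1))
    (ht₀' : (∃ ν, k ν = 1) → t₀ = 1)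
    (w : ℂ) (hw : ‖w‖ = 1) :
    t₀ * ‖G.derivative.eval w‖
      ≤ ‖(m : ℂ) * G.eval w - w * G.derivative.eval w‖ := by
  have hGw : G.eval w = b * ∏ ν, (w - z ν) := by
    rw [hG, eval_mul, eval_C, eval_prod]
    congr 1
    exact Finset.prod_congr rfl fun ν _ => by rw [eval_sub, eval_X, eval_C]
  by_cases hroot : ∃ ν, w = z ν
  · -- w is a zero of G
    obtain ⟨ν₀, hν₀⟩ := hroot
    have hkν₀ : k ν₀ = 1 := by
      have h1 := hzk ν₀
      rw [← hν₀, hw] at h1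
      exact le_antisymm h1 (hk1 ν₀)
    have ht : t₀ = 1 := ht₀' ⟨ν₀, hkν₀⟩
    have hGw0 : G.eval w = 0 := by
      rw [hGw]
      apply mul_eq_zero_of_right
      exact Finset.prod_eq_zero (mem_univ ν₀) (by rw [hν₀, sub_self])
    rw [ht, one_mul, hGw0, mul_zero, zero_sub, norm_neg, norm_mul, hw, one_mul]
  · push_neg at hroot
    have hne : ∀ ν, w - z ν ≠ 0 := fun ν => sub_ne_zero.mpr (hroot ν)
    set u : ι → ℂ := fun ν => w / (w - z ν) with hu_def
    have hnw : Complex.normSq w = 1 := by rw [← Complex.sq_norm, hw]; norm_num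
    have hu : ∀ ν, (k ν ^ 2 - 1) * ‖u ν‖ ^ 2 + 2 * (u ν).re ≤ 1 := by
      intro ν
      set d : ℂ := w - z ν with hd_def
      have hd : d ≠ 0 := hne ν
      have hN : 0 < Complex.normSq d := Complex.normSq_pos.mpr hd
      have habs2 : ‖u ν‖ ^ 2 = 1 / Complex.normSq d := by
        rw [Complex.sq_norm, hu_def]
        simp only []
        rw [← hd_def, Complex.normSq_div, hnw]
      have hure : (u ν).re = (w.re * d.re + w.im * d.im) / Complex.normSq d := by
        rw [hu_def]
        simp only []
        rw [← hd_def, Complex.div_re]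
        ring
      have hz2 : k ν ^ 2 ≤ Complex.normSq (z ν) := by
        rw [← Complex.sq_norm]
        have h0 : (0:ℝ) ≤ k ν := le_trans zero_le_one (hk1 ν)
        nlinarith [hzk ν, norm_nonneg (z ν)]
      have key : (k ν ^ 2 - 1) + 2 * (w.re * d.re + w.im * d.im) ≤ Complex.normSq d := by
        have hdre : d.re = w.re - (z ν).re := by rw [hd_def, Complex.sub_re]
        have hdim : d.im = w.im - (z ν).im := by rw [hd_def, Complex.sub_im]
        have h1 : Complex.normSq d = d.re^2 + d.im^2 := by
          rw [Complex.normSq_apply]; ring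
        have h2 : Complex.normSq w = w.re^2 + w.im^2 := by
          rw [Complex.normSq_apply]; ring
        have h3 : Complex.normSq (z ν) = (z ν).re^2 + (z ν).im^2 := by
          rw [Complex.normSq_apply]; ring
        rw [h1, hdre, hdim]
        rw [h2] at hnw
        rw [h3] at hz2
        nlinarith
      have e : (k ν ^ 2 - 1) * ‖u ν‖ ^ 2 + 2 * (u ν).re
          = ((k ν ^ 2 - 1) + 2 * (w.re * d.re + w.im * d.im)) / Complex.normSq d := by
        rw [habs2, hure]
        field_simp
      rw [e, div_le_one hN]
      exact key
    -- the logarithmic-derivative identity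
    have hder : w * G.derivative.eval w = G.eval w * ∑ ν, u ν := by
      have h1 : G.derivative = C b * derivative (∏ ν, (X - C (z ν))) := by
        rw [hG, derivative_mul, derivative_C, zero_mul, zero_add]
      rw [h1, eval_mul, eval_C, hGw]
      have h2 := eval_deriv_prod z w univ (fun i _ => hne i)
      calc w * (b * (derivative (∏ ν, (X - C (z ν)))).eval w)
          = b * (w * (derivative (∏ ν, (X - C (z ν)))).eval w) := by ring
        _ = b * ((∏ ν, (w - z ν)) * ∑ ν, w / (w - z ν)) := by rw [h2]
        _ = b * (∏ ν, (w - z ν)) * ∑ ν, u ν := by rw [hu_def]; ring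
    have hsum := sum_disk_bound m hm hcard k hk1 u hu t₀ ht₀ ht₀'
    have hGd : ‖G.derivative.eval w‖
        = ‖G.eval w‖ * ‖∑ ν, u ν‖ := by
      rw [← norm_mul]
      calc ‖G.derivative.eval w‖
          = ‖w‖ * ‖G.derivative.eval w‖ := by rw [hw, one_mul]
        _ = ‖w * G.derivative.eval w‖ := by rw [norm_mul]
        _ = ‖G.eval w * ∑ ν, u ν‖ := by rw [hder]
        _ = _ := by rw [norm_mul, ← norm_mul]
    have hGd2 : (m : ℂ) * G.eval w - w * G.derivative.eval w
        = G.eval w * ((m : ℂ) - ∑ ν, u ν) := by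
      rw [hder]; ring
    rw [hGd, hGd2, norm_mul]
    calc t₀ * (‖G.eval w‖ * ‖∑ ν, u ν‖)
        = ‖G.eval w‖ * (t₀ * ‖∑ ν, u ν‖) := by ring
      _ ≤ ‖G.eval w‖ * ‖(m:ℂ) - ∑ ν, u ν‖ :=
          mul_le_mul_of_nonneg_left hsum (norm_nonneg _)


/-- Pointwise bound for polynomials with no roots in the open unit disk. -/
private lemma polar_pointwise_one (m : ℕ) (hm : 1 ≤ m) (G : ℂ[X]) (hdeg : G.natDegree = m)
    (h0 : G ≠ 0) (hroots : ∀ r ∈ G.roots, 1 ≤ ‖r‖)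
    (w : ℂ) (hw : ‖w‖ = 1) :
    ‖G.derivative.eval w‖
      ≤ ‖(m : ℂ) * G.eval w - w * G.derivative.eval w‖ := by
  have hsplit : Splits G := IsAlgClosed.splits G
  have hfact := hsplit.eq_prod_roots
  have hcard : Multiset.card G.roots = m := by
    rw [splits_iff_card_roots.mp hsplit, hdeg]
  set l : List ℂ := G.roots.toList with hl_def
  have hlen : l.length = m := by rw [hl_def, Multiset.length_toList, hcard]
  have hcoe : (l : Multiset ℂ) = G.roots := Multiset.coe_toList _
  have hprod : (G.roots.map fun r => X - C r).prod = ∏ i : Fin l.length, (X - C (l.get i)) := by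
    conv_lhs => rw [← hcoe]
    rw [Multiset.map_coe, Multiset.prod_coe]
    conv_lhs => rw [← List.ofFn_get l]
    rw [List.map_ofFn, List.prod_ofFn]
    rfl
  have hG : G = C G.leadingCoeff * ∏ i : Fin l.length, (X - C (l.get i)) := by
    rw [← hprod]; exact hfact
  have hmem : ∀ i : Fin l.length, l.get i ∈ G.roots := by
    intro i
    rw [← hcoe]
    exact_mod_cast l.get_mem i
  have hcard' : Fintype.card (Fin l.length) = m := by rw [Fintype.card_fin, hlen]
  have := polar_pointwise (ι := Fin l.length) m hm hcard' G.leadingCoeff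
    (fun i => l.get i) G hG (fun _ => 1) (fun _ => le_refl 1)
    (fun i => by exact_mod_cast hroots _ (hmem i))
    1
    (fun h => absurd (h ⟨0, by omega⟩) (lt_irrefl 1))
    (fun _ => rfl) w hw
  simpa using this

/-- Bernstein-type estimate:  |n P(w) - w P'(w)| + |P'(w)| ≤ n M  on the unit circle. -/
private lemma bernstein_type (n : ℕ) (hn : 1 ≤ n) (P : ℂ[X]) (hdeg : P.natDegree = n) (M : ℝ)
    (hM : ∀ x : ℂ, ‖x‖ ≤ 1 → ‖P.eval x‖ ≤ M)
    (w : ℂ) (hw : ‖w‖ = 1) :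
    ‖(n : ℂ) * P.eval w - w * P.derivative.eval w‖
      + ‖P.derivative.eval w‖ ≤ n * M := by
  have hM0 : 0 ≤ M := le_trans (norm_nonneg _) (hM 0 (by simp))
  set A : ℂ := (n : ℂ) * P.eval w - w * P.derivative.eval w with hA
  set B : ℂ := P.derivative.eval w with hB
  -- key estimate from the perturbed polynomial
  have key : ∀ lam : ℂ, M < ‖lam‖ →
      ‖B‖ ≤ ‖A + n * lam‖ := by
    intro lam hlam
    set G : ℂ[X] := P + C lam with hG_def
    have hGdeg : G.natDegree = n := by
      rw [hG_def, natDegree_add_C, hdeg]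
    have hG0 : G ≠ 0 := fun h => by simp [h] at hGdeg; omega
    have hroots : ∀ r ∈ G.roots, 1 ≤ ‖r‖ := by
      intro r hr
      by_contra hcon
      push_neg at hcon
      have hroot : G.eval r = 0 := by
        have := isRoot_of_mem_roots hr
        exact this
      have h1 : P.eval r = -lam := by
        rw [hG_def] at hroot
        simp only [eval_add, eval_C] at hroot
        linear_combination hroot
      have h2 : ‖P.eval r‖ ≤ M := hM r (le_of_lt hcon)
      rw [h1, norm_neg] at h2
      linarith
    have h := polar_pointwise_one n hn G hGdeg hG0 hroots w hw
    have hGd : G.derivative = P.derivative := by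
      rw [hG_def, derivative_add, derivative_C, add_zero]
    have hGe : G.eval w = P.eval w + lam := by rw [hG_def, eval_add, eval_C]
    rw [hGd, hGe] at h
    calc ‖B‖ ≤ ‖(n:ℂ) * (P.eval w + lam) - w * P.derivative.eval w‖ := h
      _ = ‖A + n * lam‖ := by rw [hA, hB]; ring_nf
  -- now derive the conclusion
  by_contra hcon
  push_neg at hcon
  rcases eq_or_ne (‖B‖) 0 with hb | hb
  · -- B = 0
    have hB0 : B = 0 := by rwa [norm_eq_zero] at hb
    have hA0 : ‖A‖ ≤ n * M := by
      have hAe : A = (n : ℂ) * P.eval w := by rw [hA, hB0, mul_zero, sub_zero]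
      rw [hAe, norm_mul, Complex.norm_natCast]
      exact mul_le_mul_of_nonneg_left (hM w (le_of_eq hw)) (by positivity)
    rw [hb] at hcon
    linarith
  · have hbpos : 0 < ‖B‖ := lt_of_le_of_ne (norm_nonneg _) (Ne.symm hb)
    rcases eq_or_ne A 0 with hA0 | hA0
    · -- A = 0 : |B| ≤ n μ for all μ > M gives |B| ≤ n M
      have hBnM : ‖B‖ ≤ n * M := by
        apply le_of_forall_gt_imp_ge_of_dense
        intro c hc
        -- c > n*M ; choose μ := c / n > M
        have hnpos : (0:ℝ) < n := by exact_mod_cast hn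
        have hμ : M < c / n := by rw [lt_div_iff₀ hnpos]; linarith [hc]
        have := key ((c / n : ℝ) : ℂ) (by rwa [Complex.norm_real, Real.norm_eq_abs, abs_of_pos (lt_of_le_of_lt hM0 hμ)])
        rw [hA0, zero_add] at this
        calc ‖B‖ ≤ ‖(n:ℂ) * ((c/n : ℝ):ℂ)‖ := this
          _ = n * (c / n) := by
              rw [norm_mul, Complex.norm_natCast, Complex.norm_real, Real.norm_eq_abs,
                abs_of_pos (lt_of_le_of_lt hM0 hμ)]
          _ = c := by field_simp
      rw [hA0] at hcon
      simp at hcon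
      linarith
    · -- A ≠ 0 : pick x with max(nM, |A|-|B|) < x < |A|+|B|
      set a := ‖A‖ with ha
      set bb := ‖B‖ with hbb
      have hapos : 0 < a := norm_pos_iff.mpr hA0
      obtain ⟨x, hx1, hx2⟩ : ∃ x, max (n*M) (a - bb) < x ∧ x < a + bb := by
        refine ⟨(max (n*M) (a - bb) + (a + bb))/2, ?_, ?_⟩
        · have : max (n*M) (a - bb) < a + bb := by
            rw [max_lt_iff]
            constructor
            · linarith [hcon]
            · linarith [hbpos]
          linarith
        · have : max (n*M) (a - bb) < a + bb := by
            rw [max_lt_iff]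
            constructor
            · linarith [hcon]
            · linarith [hbpos]
          linarith
      have hxnM : n * M < x := lt_of_le_of_lt (le_max_left _ _) hx1
      have hxab : a - bb < x := lt_of_le_of_lt (le_max_right _ _) hx1
      have hnpos : (0:ℝ) < n := by exact_mod_cast hn
      have hxpos : 0 < x := lt_of_le_of_lt (by positivity) hxnM
      set lam : ℂ := -((x / n : ℝ) : ℂ) * (A / (a : ℂ)) with hlam_def
      have hAa : ‖A / (a:ℂ)‖ = 1 := by
        rw [norm_div, Complex.norm_real, Real.norm_eq_abs, abs_of_pos hapos, div_self (ne_of_gt hapos)]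
      have hlamabs : ‖lam‖ = x / n := by
        rw [hlam_def, norm_mul, norm_neg, Complex.norm_real, Real.norm_eq_abs,
          abs_of_pos (div_pos hxpos hnpos), hAa, mul_one]
      have hlamM : M < ‖lam‖ := by
        rw [hlamabs, lt_div_iff₀ hnpos]; linarith
      have hkey := key lam hlamM
      have hnneC : ((n:ℕ):ℂ) ≠ 0 := Nat.cast_ne_zero.mpr (by omega)
      have haneC : ((a:ℝ):ℂ) ≠ 0 := Complex.ofReal_ne_zero.mpr (ne_of_gt hapos)
      have hAlam : A + (n:ℂ) * lam = (((1 - x / a : ℝ)) : ℂ) * A := by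
        rw [hlam_def]
        push_cast
        field_simp
        ring
      rw [hAlam, norm_mul, Complex.norm_real, Real.norm_eq_abs] at hkey
      have habs2 : |1 - x/a| * ‖A‖ = |a - x| := by
        have h1 : |a - x| = |(1 - x/a) * a| := by
          rw [sub_mul, one_mul, div_mul_cancel₀ _ (ne_of_gt hapos)]
        rw [h1, abs_mul, abs_of_pos hapos, ha]
      rw [habs2] at hkey
      have hfin : |a - x| < bb := abs_sub_lt_iff.mpr ⟨by linarith, by linarith⟩
      linarith


end AuxAzizRather

/-- **Theorem 1.** If `P(z) = a ∏ (z - z_ν)` has degree `n ≥ 1` and its zeros satisfy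
`|z_ν| ≥ k_ν ≥ 1`, then with `t₀` as defined, for `|α| ≥ 1`,
`max_{|z|=1} |D_α P(z)| ≤ n ((|α| + t₀)/(1 + t₀)) max_{|z|=1} |P(z)|`. -/
theorem stmt_0 (n : ℕ) (hn : 1 ≤ n) (a : ℂ) (ha : a ≠ 0) (z : Fin n → ℂ)
    (P : Polynomial ℂ)
    (hP : P = Polynomial.C a * ∏ ν, (Polynomial.X - Polynomial.C (z ν)))
    (k : Fin n → ℝ) (hk1 : ∀ ν, 1 ≤ k ν) (hzk : ∀ ν, k ν ≤ ‖z ν‖)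
    (t₀ : ℝ)
    (ht₀ : (∀ ν, 1 < k ν) → t₀ = 1 + (n : ℝ) / ∑ ν, 1 / (k ν - 1))
    (ht₀' : (∃ ν, k ν = 1) → t₀ = 1)
    (α : ℂ) (hα : 1 ≤ ‖α‖) :
    ∀ w : ℂ, ‖w‖ = 1 →
      ‖(n : ℂ) * P.eval w + (α - w) * P.derivative.eval w‖ ≤
        (n : ℝ) * ((‖α‖ + t₀) / (1 + t₀)) *
          sSup ((fun ζ : ℂ => ‖P.eval ζ‖) '' {ζ : ℂ | ‖ζ‖ = 1}) := by
  intro w hw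
  set M : ℝ := sSup ((fun ζ : ℂ => ‖P.eval ζ‖) '' {ζ : ℂ | ‖ζ‖ = 1}) with hM_def
  -- circle as sphere
  have hsphere : {ζ : ℂ | ‖ζ‖ = 1} = Metric.sphere (0:ℂ) 1 := by
    ext ζ
    simp [mem_sphere_zero_iff_norm]
  have hbdd : BddAbove ((fun ζ : ℂ => ‖P.eval ζ‖) '' {ζ : ℂ | ‖ζ‖ = 1}) := by
    rw [hsphere]
    exact ((isCompact_sphere (0:ℂ) 1).image
      (continuous_norm.comp P.continuous)).bddAbove
  have hMup : ∀ ζ : ℂ, ‖ζ‖ = 1 → ‖P.eval ζ‖ ≤ M :=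
    fun ζ hζ => le_csSup hbdd ⟨ζ, hζ, rfl⟩
  -- maximum principle: bound on the closed disk
  have hMball : ∀ x : ℂ, ‖x‖ ≤ 1 → ‖P.eval x‖ ≤ M := by
    intro x hx
    have hcl : x ∈ closure (Metric.ball (0:ℂ) 1) := by
      rw [closure_ball (0:ℂ) one_ne_zero, mem_closedBall_zero_iff]
      exact hx
    have := Complex.norm_le_of_forall_mem_frontier_norm_le
      (Metric.isBounded_ball (x := (0:ℂ)) (r := 1))
      (P.differentiable.diffContOnCl)
      (fun ζ hζ => by
        rw [frontier_ball (0:ℂ) one_ne_zero, mem_sphere_zero_iff_norm] at hζ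
        exact hMup ζ hζ)
      hcl
    exact this
  have hdeg : P.natDegree = n := by
    rw [hP]
    rw [natDegree_C_mul ha, natDegree_prod]
    · simp
    · intro ν _
      exact X_sub_C_ne_zero (z ν)
  -- key pointwise inequality
  have hkey := polar_pointwise (ι := Fin n) n hn (by simp) a z P hP k hk1 hzk t₀ ht₀ ht₀' w hw
  have hbern := bernstein_type n hn P hdeg M hMball w hw
  -- t₀ ≥ 1
  have ht1 : 1 ≤ t₀ := by
    by_cases hall : ∀ ν, 1 < k ν
    · have hne : Nonempty (Fin n) := ⟨⟨0, by omega⟩⟩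
      have hspos : 0 < ∑ ν, 1 / (k ν - 1) :=
        Finset.sum_pos (fun ν _ => one_div_pos.mpr (by linarith [hall ν])) Finset.univ_nonempty
      rw [ht₀ hall]
      have : 0 < (n:ℝ) / ∑ ν, 1 / (k ν - 1) := by positivity
      linarith
    · push_neg at hall
      obtain ⟨ν, hν⟩ := hall
      exact le_of_eq (ht₀' ⟨ν, le_antisymm hν (hk1 ν)⟩).symm
  set A := ‖(n : ℂ) * P.eval w - w * P.derivative.eval w‖ with hA
  set B := ‖P.derivative.eval w‖ with hB
  have htri : ‖(n : ℂ) * P.eval w + (α - w) * P.derivative.eval w‖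
      ≤ A + ‖α‖ * B := by
    have he : (n : ℂ) * P.eval w + (α - w) * P.derivative.eval w
        = ((n : ℂ) * P.eval w - w * P.derivative.eval w) + α * P.derivative.eval w := by ring
    rw [he]
    refine le_trans (norm_add_le _ _) ?_
    rw [norm_mul]
  have hApos : 0 ≤ A := norm_nonneg _
  have hBpos : 0 ≤ B := norm_nonneg _
  have h1t : 0 < 1 + t₀ := by linarith
  have hMpos : 0 ≤ M := le_trans (norm_nonneg _) (hMball 0 (by simp))
  -- combine
  have hfinal : A + ‖α‖ * B ≤ (n:ℝ) * ((‖α‖ + t₀) / (1 + t₀)) * M := by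
    have hgoal : (A + ‖α‖ * B) * (1 + t₀) ≤ (n:ℝ) * (‖α‖ + t₀) * M := by
      nlinarith [mul_le_mul_of_nonneg_left hbern (le_trans zero_le_one hα),
        mul_le_mul_of_nonneg_left hbern (le_trans zero_le_one ht1),
        mul_nonneg (sub_nonneg.mpr hα) (sub_nonneg.mpr hkey)]
    have heq : (n:ℝ) * ((‖α‖ + t₀) / (1 + t₀)) * M
        = (n:ℝ) * (‖α‖ + t₀) * M / (1 + t₀) := by ring
    rw [heq, le_div_iff₀ h1t]
    exact hgoal
  exact le_trans htri hfinal
end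

section
/- Let P(z) = a_n ∏_{ν=1}^{n} (z − z_ν) be a complex polynomial of degree n ≥ 1 whose zeros satisfy |z_ν| ≥ k_ν ≥ 1 for 1 ≤ ν ≤ n, and let Q(z) = z^n · conj(P(1/conj(z))). Set t₀ = 1 + n / (∑_{ν=1}^{n} 1/(k_ν − 1)) if k_ν > 1 for all ν, and t₀ = 1 if k_ν = 1 for some ν. Then for every z with |z| = 1, |Q′(z)| ≥ t₀ |P′(z)|. -/
open Polynomial Finset

private lemma reflect_one_X_sub_C (c : ℂ) :
    Polynomial.reflect 1 (X - C c : ℂ[X]) = 1 - C c * X := by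
  have h : (X - C c : ℂ[X]) = C (-c) * X ^ 0 + X ^ 1 := by rw [map_neg]; ring
  rw [h, reflect_add, reflect_C_mul_X_pow, reflect_monomial,
    revAt_le (by norm_num : (0:ℕ) ≤ 1), revAt_le (le_refl 1)]
  simp
  ring

private lemma reflect_prod_X_sub_C {ι : Type*} [DecidableEq ι] (s : Finset ι) (c : ι → ℂ) :
    Polynomial.reflect s.card (∏ ν ∈ s, (X - C (c ν))) = ∏ ν ∈ s, (1 - C (c ν) * X) := by
  induction s using Finset.induction with
  | empty => simp
  | @insert a s ha ih =>
    rw [Finset.prod_insert ha, Finset.prod_insert ha, Finset.card_insert_of_notMem ha,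
      show s.card + 1 = 1 + s.card from Nat.add_comm _ _,
      reflect_mul _ _ (le_of_eq (natDegree_X_sub_C (c a)))
        ((Polynomial.natDegree_prod_le _ _).trans (by simp)),
      reflect_one_X_sub_C, ih]

private lemma derivative_finset_prod {ι : Type*} [DecidableEq ι] (s : Finset ι) (f : ι → ℂ[X]) :
    derivative (∏ i ∈ s, f i) = ∑ i ∈ s, (∏ j ∈ s.erase i, f j) * derivative (f i) := by
  induction s using Finset.induction with
  | empty => simp
  | @insert a s ha ih =>
    have hkey : ∀ i ∈ s, (∏ j ∈ (insert a s).erase i, f j) * derivative (f i)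
        = f a * ((∏ j ∈ s.erase i, f j) * derivative (f i)) := by
      intro i hi
      rw [Finset.erase_insert_of_ne (by rintro rfl; exact ha hi), Finset.prod_insert
        (fun h => ha (Finset.mem_of_mem_erase h)), mul_assoc]
    rw [Finset.prod_insert ha, derivative_mul, ih, Finset.mul_sum, Finset.sum_insert ha,
      Finset.erase_insert ha, Finset.sum_congr rfl hkey, mul_comm (derivative (f a))]

private lemma abs_le_abs_of_normSq {a b : ℂ} (h : Complex.normSq a ≤ Complex.normSq b) :
    ‖a‖ ≤ ‖b‖ := by
  rw [Complex.norm_def, Complex.norm_def]; exact Real.sqrt_le_sqrt h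

private lemma normSq_mono' {a b : ℂ} (h : ‖a‖ ≤ ‖b‖) :
    Complex.normSq a ≤ Complex.normSq b := by
  rw [Complex.normSq_eq_norm_sq, Complex.normSq_eq_norm_sq]
  exact pow_le_pow_left₀ (norm_nonneg _) h 2

private lemma lemA (n : ℕ) (u : Fin n → ℂ)
    (h : ∀ ν, ‖u ν‖ ≤ ‖u ν - 1‖) :
    ‖∑ ν, u ν‖ ≤ ‖∑ ν, u ν - n‖ := by
  have hre : ∀ ν, 2 * (u ν).re ≤ 1 := by
    intro ν
    have h2 := normSq_mono' (h ν)
    simp only [Complex.normSq_apply, Complex.sub_re, Complex.sub_im, Complex.one_re,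
      Complex.one_im] at h2
    nlinarith
  have hs : (∑ ν, u ν).re ≤ (n : ℝ) / 2 := by
    rw [Complex.re_sum]
    calc ∑ ν, (u ν).re ≤ ∑ _ν : Fin n, (1:ℝ)/2 := by
          apply Finset.sum_le_sum; intro ν _; linarith [hre ν]
      _ = (n : ℝ)/2 := by simp; ring
  apply abs_le_abs_of_normSq
  simp only [Complex.normSq_apply, Complex.sub_re, Complex.sub_im, Complex.natCast_re,
    Complex.natCast_im]
  nlinarith [Nat.cast_nonneg (α := ℝ) n]

private lemma lemB (n : ℕ) (hn : 1 ≤ n) (k : Fin n → ℝ) (hk : ∀ ν, 1 < k ν)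
    (u : Fin n → ℂ) (hu : ∀ ν, k ν * ‖u ν‖ ≤ ‖u ν - 1‖) :
    (1 + (n : ℝ) / ∑ ν, 1 / (k ν - 1)) * ‖∑ ν, u ν‖
      ≤ ‖∑ ν, u ν - n‖ := by
  have hne : (Finset.univ : Finset (Fin n)).Nonempty := by
    rw [Finset.univ_nonempty_iff]
    exact Fin.pos_iff_nonempty.mp hn
  have hk1 : ∀ ν, (0:ℝ) < k ν - 1 := fun ν => by linarith [hk ν]
  have hk2 : ∀ ν, (0:ℝ) < k ν ^ 2 - 1 := fun ν => by nlinarith [hk ν]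
  set Av : Fin n → ℝ := fun ν => 1 / (k ν ^ 2 - 1) with hAv
  set rv : Fin n → ℝ := fun ν => k ν / (k ν ^ 2 - 1) with hrv
  set A : ℝ := ∑ ν, Av ν with hA
  set Bb : ℝ := ∑ ν, rv ν with hBb
  have hAvpos : ∀ ν, 0 < Av ν := fun ν => by
    rw [hAv]; exact div_pos one_pos (hk2 ν)
  have hrvpos : ∀ ν, 0 < rv ν := fun ν => by
    rw [hrv]; exact div_pos (by linarith [hk ν]) (hk2 ν)
  have hA0 : 0 < A := Finset.sum_pos (fun ν _ => hAvpos ν) hne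
  have hB0 : 0 < Bb := Finset.sum_pos (fun ν _ => hrvpos ν) hne
  have hT : ∑ ν, 1 / (k ν - 1) = A + Bb := by
    rw [hA, hBb, ← Finset.sum_add_distrib]
    apply Finset.sum_congr rfl
    intro ν _
    rw [hAv, hrv]
    have h1 := (hk1 ν).ne'
    have h2 := (hk2 ν).ne'
    field_simp
    ring
  have hD : ∑ ν, 1 / (k ν + 1) = Bb - A := by
    rw [hA, hBb, ← Finset.sum_sub_distrib]
    apply Finset.sum_congr rfl
    intro ν _
    have h1 : (0:ℝ) < k ν + 1 := by linarith [hk ν]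
    have h2 := (hk2 ν).ne'
    rw [hAv, hrv]
    field_simp
    ring
  have cheb : (A + Bb) * (Bb - A) ≤ (n:ℝ) * A := by
    have hmono : Monovary (fun ν => 1 / (k ν - 1)) (fun ν => 1 / (k ν + 1)) := by
      intro i j hij
      simp only at hij ⊢
      have hji : k j + 1 < k i + 1 := by
        by_contra hcon
        push_neg at hcon
        exact absurd (one_div_le_one_div_of_le (by linarith [hk i]) hcon) (not_le.mpr hij)
      apply one_div_le_one_div_of_le (hk1 j)
      linarith
    have hprod : ∑ ν, (1 / (k ν - 1)) * (1 / (k ν + 1)) = A := by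
      rw [hA]
      apply Finset.sum_congr rfl
      intro ν _
      rw [hAv, div_mul_div_comm, one_mul]
      congr 1
      ring
    have := hmono.sum_mul_sum_le_card_mul_sum
    rw [hT, hD, hprod, Fintype.card_fin] at this
    exact this
  have hdisk : ∀ ν, ‖u ν + (Av ν : ℂ)‖ ≤ rv ν := by
    intro ν
    have hsq0 : (k ν * ‖u ν‖)^2 ≤ (‖u ν - 1‖)^2 :=
      pow_le_pow_left₀ (mul_nonneg (by linarith [hk ν]) (norm_nonneg _)) (hu ν) 2
    rw [mul_pow, Complex.sq_norm, Complex.sq_norm] at hsq0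
    set a := (u ν).re
    set b := (u ν).im
    have hsq : (k ν)^2 * (a^2 + b^2) ≤ (a-1)^2 + b^2 := by
      simpa [Complex.normSq_apply, Complex.sub_re, Complex.sub_im, a, b, sq] using hsq0
    have key : (k ν^2 - 1) * ((rv ν)^2 - ((a + Av ν)^2 + b^2))
        = 1 - 2*a - (k ν^2 - 1)*(a^2 + b^2) := by
      rw [hAv, hrv]
      have h2 := (hk2 ν).ne'
      field_simp
      ring
    have h3 : 0 ≤ (k ν^2 - 1) * ((rv ν)^2 - ((a + Av ν)^2 + b^2)) := by
      rw [key]; nlinarith [hsq]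
    have h4 : (a + Av ν)^2 + b^2 ≤ (rv ν)^2 := by nlinarith [h3, hk2 ν]
    have h5 : Complex.normSq (u ν + (Av ν : ℂ)) = (a + Av ν)^2 + b^2 := by
      simp [Complex.normSq_apply, Complex.add_re, Complex.add_im, a, b, sq]
    calc ‖u ν + (Av ν : ℂ)‖ = Real.sqrt ((a + Av ν)^2 + b^2) := by
          rw [Complex.norm_def, h5]
      _ ≤ Real.sqrt ((rv ν)^2) := Real.sqrt_le_sqrt h4
      _ = rv ν := Real.sqrt_sq (hrvpos ν).le
  set s : ℂ := ∑ ν, u ν with hs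
  have htri : ‖s + (A : ℂ)‖ ≤ Bb := by
    have hcast : s + (A : ℂ) = ∑ ν, (u ν + (Av ν : ℂ)) := by
      rw [Finset.sum_add_distrib, hs, hA]
      push_cast
      ring
    rw [hcast]
    calc ‖∑ ν, (u ν + (Av ν : ℂ))‖ ≤ ∑ ν, ‖u ν + (Av ν : ℂ)‖ :=
          norm_sum_le _ _
      _ ≤ ∑ ν, rv ν := Finset.sum_le_sum (fun ν _ => hdisk ν)
      _ = Bb := hBb.symm
  set vr : ℝ := s.re + A with hvr'
  set vi : ℝ := s.im with hvi'
  have hc : vr^2 + vi^2 ≤ Bb^2 := by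
    have := normSq_mono' (a := s + (A:ℂ)) (b := (Bb:ℂ)) (by
      rwa [Complex.norm_of_nonneg hB0.le])
    simp only [Complex.normSq_apply, Complex.add_re, Complex.add_im, Complex.ofReal_re,
      Complex.ofReal_im] at this
    calc vr^2 + vi^2 = (s.re + A)*(s.re + A) + (s.im + 0)*(s.im + 0) := by
          rw [hvr', hvi']; ring
      _ ≤ Bb * Bb + 0 * 0 := this
      _ = Bb^2 := by ring
  clear_value A Bb vr vi
  have hvrB : -Bb ≤ vr := by nlinarith [hc, sq_nonneg (vr + Bb), hB0]
  have main : ((A+Bb)+(n:ℝ))^2 * ((vr-A)^2+vi^2) ≤ (A+Bb)^2*((vr-A-(n:ℝ))^2+vi^2) := by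
    have hslack : 0 ≤ (n:ℝ)*A - (A+Bb)*(Bb-A) := by linarith [cheb]
    have hn0 : (0:ℝ) ≤ (n:ℝ) := Nat.cast_nonneg n
    have h1 : 0 ≤ (2*(n:ℝ)) * ((vr+Bb) * ((n:ℝ)*A - (A+Bb)*(Bb-A))) :=
      mul_nonneg (by positivity) (mul_nonneg (by linarith) hslack)
    have h2 : 0 ≤ ((n:ℝ)*(2*(A+Bb)+(n:ℝ))) * (Bb^2 - vr^2 - vi^2) :=
      mul_nonneg (by positivity) (by linarith [hc])
    linarith [h1, h2]
  have hT0 : (0:ℝ) < A + Bb := by linarith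
  have ht : 1 + (n:ℝ) / ∑ ν, 1 / (k ν - 1) = ((A+Bb)+(n:ℝ))/(A+Bb) := by
    rw [hT]
    field_simp
  have htpos : (0:ℝ) < ((A+Bb)+(n:ℝ))/(A+Bb) := by positivity
  rw [ht]
  have hnsq1 : Complex.normSq s = (vr-A)^2 + vi^2 := by
    simp only [Complex.normSq_apply, hvr', hvi']
    ring
  have hnsq2 : Complex.normSq (s - (n:ℂ)) = (vr-A-(n:ℝ))^2 + vi^2 := by
    simp only [Complex.normSq_apply, Complex.sub_re, Complex.sub_im, Complex.natCast_re,
      Complex.natCast_im, hvr', hvi']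
    ring
  have habs2 : ((((A+Bb)+(n:ℝ))/(A+Bb)) * ‖s‖)^2 ≤ (‖s - (n:ℂ)‖)^2 := by
    rw [mul_pow, Complex.sq_norm, Complex.sq_norm, hnsq1, hnsq2, div_pow,
      div_mul_eq_mul_div, div_le_iff₀ (by positivity)]
    nlinarith [main]
  have hL0 : 0 ≤ (((A+Bb)+(n:ℝ))/(A+Bb)) * ‖s‖ :=
    mul_nonneg htpos.le (norm_nonneg _)
  have := Real.sqrt_le_sqrt habs2
  rwa [Real.sqrt_sq hL0, Real.sqrt_sq (norm_nonneg _)] at this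

/-- **Lemma 1 (Gardner–Govil).** If `P(z) = a ∏ (z - z_ν)` has degree `n ≥ 1` with
`|z_ν| ≥ k_ν ≥ 1`, and `Q(z) = z^n conj(P(1/conj z))`, then `|Q'(z)| ≥ t₀ |P'(z)|`
on `|z| = 1`. -/
theorem stmt_2 (n : ℕ) (hn : 1 ≤ n) (a : ℂ) (ha : a ≠ 0) (z : Fin n → ℂ)
    (P Q : Polynomial ℂ)
    (hP : P = Polynomial.C a * ∏ ν, (Polynomial.X - Polynomial.C (z ν)))
    (hQ : Q = Polynomial.reflect n (P.map (starRingEnd ℂ)))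
    (k : Fin n → ℝ) (hk1 : ∀ ν, 1 ≤ k ν) (hzk : ∀ ν, k ν ≤ ‖z ν‖)
    (t₀ : ℝ)
    (ht₀ : (∀ ν, 1 < k ν) → t₀ = 1 + (n : ℝ) / ∑ ν, 1 / (k ν - 1))
    (ht₀' : (∃ ν, k ν = 1) → t₀ = 1) :
    ∀ w : ℂ, ‖w‖ = 1 →
      t₀ * ‖P.derivative.eval w‖ ≤ ‖Q.derivative.eval w‖ := by
  intro w hw
  have hw0 : w ≠ 0 := by
    intro h; rw [h] at hw; simp at hw
  have hwc : w * (starRingEnd ℂ) w = 1 := by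
    rw [Complex.mul_conj, Complex.normSq_eq_norm_sq, hw]
    norm_num
  -- explicit form of Q
  have hQex : Q = C ((starRingEnd ℂ) a) * ∏ ν, (1 - C ((starRingEnd ℂ) (z ν)) * X) := by
    rw [hQ, hP, Polynomial.map_mul, map_C]
    have hmp : (∏ ν, (X - C (z ν))).map (starRingEnd ℂ)
        = ∏ ν, (X - C ((starRingEnd ℂ) (z ν))) := by
      rw [Polynomial.map_prod]
      apply Finset.prod_congr rfl
      intro ν _
      rw [Polynomial.map_sub, map_X, map_C]
    rw [hmp, reflect_C_mul]
    congr 1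
    have h := reflect_prod_X_sub_C (Finset.univ : Finset (Fin n))
      (fun ν => (starRingEnd ℂ) (z ν))
    rwa [Finset.card_univ, Fintype.card_fin] at h
  -- eval of derivative of P
  have hPd : P.derivative.eval w = a * ∑ ν, ∏ μ ∈ Finset.univ.erase ν, (w - z μ) := by
    rw [hP, derivative_C_mul, derivative_finset_prod, eval_mul, eval_C, eval_finset_sum]
    congr 1
    apply Finset.sum_congr rfl
    intro ν _
    rw [derivative_sub, derivative_X, derivative_C, sub_zero, mul_one, eval_prod]
    apply Finset.prod_congr rfl
    intro μ _
    simp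
  -- eval of derivative of Q
  have hQd : Q.derivative.eval w
      = (starRingEnd ℂ) a * ∑ ν, (∏ μ ∈ Finset.univ.erase ν, (1 - (starRingEnd ℂ) (z μ) * w))
          * (-((starRingEnd ℂ) (z ν))) := by
    rw [hQex, derivative_C_mul, derivative_finset_prod, eval_mul, eval_C, eval_finset_sum]
    congr 1
    apply Finset.sum_congr rfl
    intro ν _
    rw [derivative_sub, derivative_one, derivative_C_mul, derivative_X, mul_one, zero_sub,
      eval_mul, eval_neg, eval_C, eval_prod]
    congr 1
    apply Finset.prod_congr rfl
    intro μ _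
    simp
  -- rewrite factor
  have hfac : ∀ μ, 1 - (starRingEnd ℂ) (z μ) * w = w * (starRingEnd ℂ) (w - z μ) := by
    intro μ
    rw [map_sub]
    linear_combination -hwc
  have hGprod : ∀ ν : Fin n, (∏ μ ∈ Finset.univ.erase ν, (1 - (starRingEnd ℂ) (z μ) * w))
      = w^(n-1) * (starRingEnd ℂ) (∏ μ ∈ Finset.univ.erase ν, (w - z μ)) := by
    intro ν
    rw [map_prod]
    calc (∏ μ ∈ Finset.univ.erase ν, (1 - (starRingEnd ℂ) (z μ) * w))
        = ∏ μ ∈ Finset.univ.erase ν, (w * (starRingEnd ℂ) (w - z μ)) :=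
          Finset.prod_congr rfl (fun μ _ => hfac μ)
      _ = (∏ _μ ∈ Finset.univ.erase ν, w) * ∏ μ ∈ Finset.univ.erase ν, (starRingEnd ℂ) (w - z μ) := by
          rw [Finset.prod_mul_distrib]
      _ = w^(n-1) * ∏ μ ∈ Finset.univ.erase ν, (starRingEnd ℂ) (w - z μ) := by
          rw [Finset.prod_const, Finset.card_erase_of_mem (Finset.mem_univ ν),
            Finset.card_univ, Fintype.card_fin]
  have hQd2 : Q.derivative.eval w
      = w^(n-1) * (starRingEnd ℂ) (a * ∑ ν, (∏ μ ∈ Finset.univ.erase ν, (w - z μ)) * (-(z ν))) := by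
    rw [hQd, map_mul, map_sum, Finset.mul_sum, Finset.mul_sum, Finset.mul_sum]
    apply Finset.sum_congr rfl
    intro ν _
    rw [map_mul, map_neg, hGprod ν]
    ring
  -- absolute values
  set S1 : ℂ := ∑ ν, ∏ μ ∈ Finset.univ.erase ν, (w - z μ) with hS1
  set S2 : ℂ := ∑ ν, (∏ μ ∈ Finset.univ.erase ν, (w - z μ)) * (z ν) with hS2
  have habsP : ‖P.derivative.eval w‖ = ‖a‖ * ‖S1‖ := by
    rw [hPd, norm_mul]
  have habsQ : ‖Q.derivative.eval w‖ = ‖a‖ * ‖S2‖ := by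
    have hneg : (∑ ν, (∏ μ ∈ Finset.univ.erase ν, (w - z μ)) * (-(z ν))) = -S2 := by
      rw [hS2, ← Finset.sum_neg_distrib]
      apply Finset.sum_congr rfl
      intro ν _
      ring
    rw [hQd2, hneg, norm_mul, norm_pow, hw, one_pow, one_mul, Complex.norm_conj, norm_mul,
      norm_neg]
  rw [habsP, habsQ]
  -- the key inequality
  have key : t₀ * ‖S1‖ ≤ ‖S2‖ := by
    by_cases hcase : ∃ ν₀, w = z ν₀
    · obtain ⟨ν₀, hν₀⟩ := hcase
      have habsz : ‖z ν₀‖ = 1 := by rw [← hν₀, hw]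
      have hk0 : k ν₀ = 1 := le_antisymm (by rw [← habsz] at *; exact hzk ν₀) (hk1 ν₀)
      have ht1 : t₀ = 1 := ht₀' ⟨ν₀, hk0⟩
      have hGz : ∀ ν, ν ≠ ν₀ → (∏ μ ∈ Finset.univ.erase ν, (w - z μ)) = 0 := by
        intro ν hν
        apply Finset.prod_eq_zero (Finset.mem_erase.mpr ⟨Ne.symm hν, Finset.mem_univ ν₀⟩)
        rw [← hν₀, sub_self]
      have hS1e : S1 = ∏ μ ∈ Finset.univ.erase ν₀, (w - z μ) := by
        rw [hS1]
        apply Finset.sum_eq_single ν₀ (fun b _ hb => hGz b hb)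
        intro h
        exact absurd (Finset.mem_univ ν₀) h
      have hS2e : S2 = (∏ μ ∈ Finset.univ.erase ν₀, (w - z μ)) * (z ν₀) := by
        rw [hS2]
        apply Finset.sum_eq_single ν₀ (fun b _ hb => by rw [hGz b hb, zero_mul])
        intro h
        exact absurd (Finset.mem_univ ν₀) h
      rw [ht1, one_mul, hS1e, hS2e, norm_mul, habsz, mul_one]
    · push_neg at hcase
      have hsub : ∀ ν, w - z ν ≠ 0 := fun ν => sub_ne_zero.mpr (hcase ν)
      set u : Fin n → ℂ := fun ν => w * (w - z ν)⁻¹ with hu'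
      set Pi : ℂ := ∏ ν, (w - z ν) with hPi
      have hPi0 : Pi ≠ 0 := Finset.prod_ne_zero_iff.mpr (fun ν _ => hsub ν)
      have hGu : ∀ ν, w * (∏ μ ∈ Finset.univ.erase ν, (w - z μ)) = u ν * Pi := by
        intro ν
        have h2 : (w - z ν) * (∏ μ ∈ Finset.univ.erase ν, (w - z μ)) = Pi :=
          Finset.mul_prod_erase Finset.univ (fun μ => w - z μ) (Finset.mem_univ ν)
        have h3 : u ν * Pi = w * ((w - z ν)⁻¹ * (w - z ν)) * (∏ μ ∈ Finset.univ.erase ν, (w - z μ)) := by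
          rw [← h2, hu']
          ring
        rw [h3, inv_mul_cancel₀ (hsub ν), mul_one]
      have hzGu : ∀ ν, (∏ μ ∈ Finset.univ.erase ν, (w - z μ)) * (z ν) = (u ν - 1) * Pi := by
        intro ν
        have h := Finset.mul_prod_erase Finset.univ (fun μ => w - z μ) (Finset.mem_univ ν)
        calc (∏ μ ∈ Finset.univ.erase ν, (w - z μ)) * (z ν)
            = w * (∏ μ ∈ Finset.univ.erase ν, (w - z μ))
              - (w - z ν) * (∏ μ ∈ Finset.univ.erase ν, (w - z μ)) := by ring
          _ = u ν * Pi - Pi := by rw [hGu ν, h, hPi]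
          _ = (u ν - 1) * Pi := by ring
      have hsum1 : w * S1 = (∑ ν, u ν) * Pi := by
        rw [hS1, Finset.mul_sum, Finset.sum_mul]
        exact Finset.sum_congr rfl (fun ν _ => hGu ν)
      have hsum2 : S2 = ((∑ ν, u ν) - n) * Pi := by
        rw [hS2, Finset.sum_congr rfl (fun ν _ => hzGu ν), ← Finset.sum_mul]
        congr 1
        rw [Finset.sum_sub_distrib, Finset.sum_const, Finset.card_univ, Fintype.card_fin,
          nsmul_eq_mul, mul_one]
      have habsS1 : ‖S1‖ = ‖∑ ν, u ν‖ * ‖Pi‖ := by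
        have := congrArg (fun x : ℂ => ‖x‖) hsum1
        rwa [norm_mul, norm_mul, hw, one_mul] at this
      have habsS2 : ‖S2‖ = ‖(∑ ν, u ν) - n‖ * ‖Pi‖ := by
        rw [hsum2, norm_mul]
      rw [habsS1, habsS2, ← mul_assoc]
      apply mul_le_mul_of_nonneg_right _ (norm_nonneg _)
      -- per-term hypothesis
      have hu : ∀ ν, k ν * ‖u ν‖ ≤ ‖u ν - 1‖ := by
        intro ν
        have hu1 : u ν - 1 = z ν * (w - z ν)⁻¹ := by
          have hc := mul_inv_cancel₀ (hsub ν)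
          rw [hu']
          simp only
          linear_combination hc
        have h1 : ‖u ν‖ = (‖w - z ν‖)⁻¹ := by
          simp only [hu', norm_mul, norm_inv, hw, one_mul]
        have h2 : ‖u ν - 1‖ = ‖z ν‖ * (‖w - z ν‖)⁻¹ := by
          rw [hu1, norm_mul, norm_inv]
        rw [h1, h2]
        exact mul_le_mul_of_nonneg_right (hzk ν) (by positivity)
      by_cases hex : ∃ ν, k ν = 1
      · rw [ht₀' hex, one_mul]
        apply lemA
        intro ν
        calc ‖u ν‖ = 1 * ‖u ν‖ := (one_mul _).symm
          _ ≤ k ν * ‖u ν‖ :=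
              mul_le_mul_of_nonneg_right (hk1 ν) (norm_nonneg _)
          _ ≤ ‖u ν - 1‖ := hu ν
      · push_neg at hex
        have hkk : ∀ ν, 1 < k ν := fun ν => lt_of_le_of_ne (hk1 ν) (Ne.symm (hex ν))
        rw [ht₀ hkk]
        exact lemB n hn k hkk u hu
  calc t₀ * (‖a‖ * ‖S1‖) = ‖a‖ * (t₀ * ‖S1‖) := by ring
    _ ≤ ‖a‖ * ‖S2‖ :=
        mul_le_mul_of_nonneg_left key (norm_nonneg _)
end

section
/- Let P be a complex polynomial of degree n ≥ 1 and let Q(z) = z^n · conj(P(1/conj(z))). Then for every z with |z| = 1, |P′(z)| + |Q′(z)| ≤ n · max_{|z|=1} |P(z)|. -/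
open Polynomial

lemma coeff_X_mul' (p : ℂ[X]) (m : ℕ) :
    coeff (X * p) m = if m = 0 then 0 else coeff p (m - 1) := by
  rcases m with _ | m
  · simp
  · simp [coeff_X_mul]

lemma deriv_reflect (N : ℕ) (p : ℂ[X]) (hp : p.natDegree ≤ N + 1) :
    derivative (reflect (N + 1) p) =
      reflect N ((N + 1 : ℂ) • p - X * derivative p) := by
  ext k
  rw [coeff_derivative, coeff_reflect, coeff_reflect]
  rcases le_or_gt k N with hk | hk
  · rw [revAt_le (by omega : k + 1 ≤ N + 1), revAt_le hk]
    rw [coeff_sub, coeff_smul, coeff_X_mul']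
    rcases Nat.eq_zero_or_pos (N - k) with h0 | h0
    · have : N = k := by omega
      subst this
      simp [h0]
      ring
    · rw [if_neg (by omega), coeff_derivative]
      have : N - k - 1 + 1 = N - k := by omega
      rw [this]
      have hNk : N + 1 - (k + 1) = N - k := by omega
      rw [hNk]
      rw [smul_eq_mul]
      have e1 : ((N - k - 1 : ℕ) : ℂ) + 1 = (N : ℂ) - k := by
        rw [Nat.cast_sub (by omega : 1 ≤ N - k), Nat.cast_sub (by omega : k ≤ N)]
        push_cast; ring
      rw [e1]
      ring
  · rw [revAt_eq_self_of_lt (by omega : N + 1 < k + 1), revAt_eq_self_of_lt hk]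
    have h1 : p.coeff (k + 1) = 0 := coeff_eq_zero_of_natDegree_lt (by omega)
    rw [h1, zero_mul, coeff_sub, coeff_smul, coeff_X_mul']
    rcases le_or_gt k (N + 1) with h2 | h2
    · have hkN : k = N + 1 := by omega
      subst hkN
      rw [if_neg (by omega), coeff_derivative]
      have : N + 1 - 1 + 1 = N + 1 := by omega
      rw [this]
      rcases le_or_gt p.natDegree N with h3 | h3
      · rw [coeff_eq_zero_of_natDegree_lt (by omega)]
        simp
      · have : p.natDegree = N + 1 := by omega
        rw [smul_eq_mul]
        push_cast
        ring
    · rw [if_neg (by omega), coeff_derivative,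
        coeff_eq_zero_of_natDegree_lt (by omega : p.natDegree < k),
        coeff_eq_zero_of_natDegree_lt (by omega : p.natDegree < k - 1 + 1)]
      simp

lemma eval_reflect (N : ℕ) (q : ℂ[X]) (hq : q.natDegree ≤ N) (w : ℂ) (hw : w ≠ 0) :
    eval w (reflect N q) = w ^ N * eval w⁻¹ q := by
  have : Invertible (w⁻¹) := invertibleOfNonzero (inv_ne_zero hw)
  have h := eval₂_reflect_mul_pow (RingHom.id ℂ) (w⁻¹) N q hq
  simp only [eval₂_eq_eval_map, Polynomial.map_id] at h
  rw [invOf_eq_inv, inv_inv] at h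
  rw [← h]
  rw [mul_left_comm, ← mul_pow, mul_inv_cancel₀ hw, one_pow, mul_one]

local notation "conj'" => starRingEnd ℂ

lemma conj_eval (p : ℂ[X]) (z : ℂ) :
    (p.map conj').eval (conj' z) = conj' (p.eval z) := by
  rw [eval_map, eval₂_at_apply]

lemma q_natDegree (n : ℕ) (hn : 1 ≤ n) (p : ℂ[X]) (hp : p.natDegree ≤ n) :
    ((n : ℂ) • p - X * derivative p).natDegree ≤ n - 1 := by
  rw [natDegree_le_iff_coeff_eq_zero]
  intro m hm
  have hm1 : 1 ≤ m := by omega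
  rw [coeff_sub, coeff_smul, coeff_X_mul' _ m, if_neg (by omega)]
  rw [coeff_derivative]
  have h1 : m - 1 + 1 = m := by omega
  rw [h1]
  rcases le_or_gt m p.natDegree with h2 | h2
  · have hmn : m = n := le_antisymm (h2.trans hp) (by omega)
    rw [smul_eq_mul]
    have e1 : ((m - 1 : ℕ) : ℂ) + 1 = (m : ℂ) := by
      rw [Nat.cast_sub (by omega : 1 ≤ m)]; push_cast; ring
    rw [e1, hmn]; ring
  · rw [coeff_eq_zero_of_natDegree_lt h2]
    simp

lemma Q_eval (n : ℕ) (hn : 1 ≤ n) (P : ℂ[X]) (hdeg : P.natDegree = n)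
    (w : ℂ) (hw : ‖w‖ = 1) :
    (reflect n (P.map conj')).eval w = w ^ n * conj' (P.eval w) := by
  have hw0 : w ≠ 0 := by
    intro h; rw [h] at hw; simp at hw
  have hPc : (P.map conj').natDegree ≤ n := by
    rw [natDegree_map_eq_of_injective (RingHom.injective _) P, hdeg]
  rw [eval_reflect n _ hPc w hw0, Complex.inv_eq_conj hw, conj_eval]

lemma Q_deriv_eval (n : ℕ) (hn : 1 ≤ n) (P : ℂ[X]) (hdeg : P.natDegree = n)
    (w : ℂ) (hw : ‖w‖ = 1) :
    (derivative (reflect n (P.map conj'))).eval w =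
      w ^ (n - 1) * conj' ((n : ℂ) * P.eval w - w * (derivative P).eval w) := by
  have hw0 : w ≠ 0 := by
    intro h; rw [h] at hw; simp at hw
  have hPc : (P.map conj').natDegree ≤ n := by
    rw [natDegree_map_eq_of_injective (RingHom.injective _) P, hdeg]
  obtain ⟨N, rfl⟩ : ∃ N, n = N + 1 := ⟨n - 1, by omega⟩
  rw [deriv_reflect N _ hPc]
  rw [eval_reflect N _ (by simpa using q_natDegree (N+1) hn _ hPc) w hw0]
  rw [Complex.inv_eq_conj hw]
  rw [eval_sub, eval_smul, eval_mul, eval_X, derivative_map, conj_eval, conj_eval]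
  simp only [Nat.add_sub_cancel, smul_eq_mul]
  rw [map_sub, map_mul, map_mul, map_natCast]
  push_cast
  ring

lemma re_div_le_half (z a : ℂ) (hz : ‖z‖ = 1) (ha : 1 ≤ ‖a‖)
    (hne : z - a ≠ 0) : (z / (z - a)).re ≤ 1 / 2 := by
  have hz2 : z.re ^ 2 + z.im ^ 2 = 1 := by
    have h := Complex.sq_norm z
    rw [hz, Complex.normSq_apply] at h
    nlinarith
  have ha2 : 1 ≤ a.re ^ 2 + a.im ^ 2 := by
    have h := Complex.sq_norm a
    rw [Complex.normSq_apply] at h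
    nlinarith [norm_nonneg a]
  have hpos : 0 < Complex.normSq (z - a) := Complex.normSq_pos.mpr hne
  rw [Complex.div_re]
  rw [← add_div, div_le_iff₀ hpos]
  rw [Complex.normSq_apply] at hpos ⊢
  simp only [Complex.sub_re, Complex.sub_im] at *
  nlinarith

lemma re_logDeriv_le (s : Multiset ℂ) (hs : ∀ a ∈ s, 1 ≤ ‖a‖)
    (z : ℂ) (hz : ‖z‖ = 1)
    (h0 : eval z (s.map (fun a => X - C a)).prod ≠ 0) :
    (z * eval z (derivative (s.map (fun a => X - C a)).prod) /
      eval z (s.map (fun a => X - C a)).prod).re ≤ (s.card : ℝ) / 2 := by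
  induction s using Multiset.induction with
  | empty => simp
  | cons a t ih =>
    rw [Multiset.map_cons, Multiset.prod_cons] at h0 ⊢
    set G := (t.map (fun a => X - C a)).prod with hG
    rw [eval_mul] at h0
    have hza : eval z (X - C a) ≠ 0 := left_ne_zero_of_mul h0
    have hGz : eval z G ≠ 0 := right_ne_zero_of_mul h0
    have hd : derivative ((X - C a) * G) = G + (X - C a) * derivative G := by
      rw [derivative_mul]
      simp
    rw [hd]
    have heq : z * eval z (G + (X - C a) * derivative G) / eval z ((X - C a) * G)
        = z / (z - a) + z * eval z (derivative G) / eval z G := by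
      simp only [eval_add, eval_mul, eval_sub, eval_X, eval_C] at *
      field_simp
    rw [heq, Complex.add_re]
    have h1 : (z / (z - a)).re ≤ 1 / 2 := by
      apply re_div_le_half z a hz (hs a (Multiset.mem_cons_self a t))
      simpa using hza
    have h2 := ih (fun b hb => hs b (Multiset.mem_cons_of_mem hb)) hGz
    rw [Multiset.card_cons]
    push_cast
    linarith

lemma abs_deriv_le_of_re (n : ℕ) (u v : ℂ) (hv : v ≠ 0)
    (hre : (u / v).re ≤ (n : ℝ) / 2) :
    ‖u‖ ≤ ‖(n : ℂ) * v - u‖ := by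
  have hkey : (u * (starRingEnd ℂ) v).re ≤ (n : ℝ) / 2 * Complex.normSq v := by
    have hu : u = (u / v) * v := by field_simp
    have : u * (starRingEnd ℂ) v = (u / v) * (Complex.normSq v : ℂ) := by
      rw [← Complex.mul_conj v]
      calc u * (starRingEnd ℂ) v = (u / v * v) * (starRingEnd ℂ) v := by rw [← hu]
        _ = u / v * (v * (starRingEnd ℂ) v) := by ring
    rw [this, Complex.mul_re]
    simp only [Complex.ofReal_re, Complex.ofReal_im, mul_zero, sub_zero]
    have hnsq : 0 ≤ Complex.normSq v := Complex.normSq_nonneg v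
    nlinarith
  have hsq : Complex.normSq u ≤ Complex.normSq ((n : ℂ) * v - u) := by
    rw [Complex.normSq_sub]
    have h1 : Complex.normSq ((n : ℂ) * v) = (n : ℝ) ^ 2 * Complex.normSq v := by
      rw [Complex.normSq_mul, Complex.normSq_natCast]
      ring
    have h2 : ((n : ℂ) * v * (starRingEnd ℂ) u).re = (n : ℝ) * (v * (starRingEnd ℂ) u).re := by
      rw [mul_assoc, Complex.mul_re]
      simp
    have h3 : (v * (starRingEnd ℂ) u).re = (u * (starRingEnd ℂ) v).re := by
      have : v * (starRingEnd ℂ) u = (starRingEnd ℂ) (u * (starRingEnd ℂ) v) := by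
        rw [map_mul, Complex.conj_conj]; ring
      rw [this, Complex.conj_re]
    rw [h1, h2, h3]
    nlinarith [Complex.normSq_nonneg v]
  rw [Complex.norm_def, Complex.norm_def]
  exact Real.sqrt_le_sqrt hsq

lemma key_ineq (n : ℕ) (F : ℂ[X]) (hdeg : F.natDegree ≤ n)
    (hroots : ∀ a ∈ F.roots, 1 ≤ ‖a‖) (z : ℂ) (hz : ‖z‖ = 1)
    (hFz : eval z F ≠ 0) :
    ‖eval z (derivative F)‖ ≤
      ‖(n : ℂ) * eval z F - z * eval z (derivative F)‖ := by
  have hF : F ≠ 0 := fun h => hFz (by simp [h])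
  have hsplit : Splits F := IsAlgClosed.splits F
  have hfac := hsplit.eq_prod_roots
  set Pr := (F.roots.map fun a => X - C a).prod with hPr
  have hlc : F.leadingCoeff ≠ 0 := leadingCoeff_ne_zero.mpr hF
  have hfd : derivative F = C F.leadingCoeff * derivative Pr := by
    conv_lhs => rw [hfac]
    rw [derivative_C_mul]
  have hPrz : eval z Pr ≠ 0 := by
    intro h
    apply hFz
    rw [hfac, eval_mul, h, mul_zero]
  have hre : (z * eval z (derivative F) / eval z F).re ≤ (n : ℝ) / 2 := by
    have hq : z * eval z (derivative F) / eval z F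
        = z * eval z (derivative Pr) / eval z Pr := by
      rw [hfd]
      conv_lhs => rw [hfac]
      rw [eval_mul, eval_mul, eval_C]
      rw [← hfac, mul_left_comm, eval_C, mul_div_mul_left _ _ hlc]
    rw [hq]
    have := re_logDeriv_le F.roots hroots z hz hPrz
    have hcard : (F.roots.card : ℝ) ≤ (n : ℝ) := by
      exact_mod_cast (F.card_roots').trans hdeg
    calc (z * eval z (derivative Pr) / eval z Pr).re ≤ (F.roots.card : ℝ) / 2 := this
      _ ≤ (n : ℝ) / 2 := by linarith
  have h2 := abs_deriv_le_of_re n (z * eval z (derivative F)) (eval z F) hFz hre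
  have hzabs : ‖z * eval z (derivative F)‖ = ‖eval z (derivative F)‖ := by
    rw [norm_mul, hz, one_mul]
  rw [← hzabs]
  exact h2

lemma maxmod (R : ℂ[X]) (M : ℝ)
    (hub : ∀ ζ : ℂ, ‖ζ‖ = 1 → ‖R.eval ζ‖ ≤ M) :
    ∀ z : ℂ, ‖z‖ ≤ 1 → ‖R.eval z‖ ≤ M := by
  intro z hz
  have h := Complex.norm_le_of_forall_mem_frontier_norm_le
    (U := Metric.ball (0 : ℂ) 1) Metric.isBounded_ball
    (f := fun z => R.eval z) (C := M) ?_ ?_ (z := z) ?_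
  · simpa using h
  · exact (R.differentiable).diffContOnCl
  · intro ζ hζ
    rw [frontier_ball (0 : ℂ) one_ne_zero] at hζ
    have : ‖ζ‖ = 1 := by
      simpa [Complex.dist_eq] using hζ
    simpa using hub ζ this
  · rw [closure_ball (0 : ℂ) one_ne_zero]
    simpa [Complex.dist_eq] using hz

lemma exists_unimodular_ne_zero (P : ℂ[X]) (n : ℕ) (hdeg : P.natDegree = n) (hn : 1 ≤ n) :
    ∃ ζ : ℂ, ‖ζ‖ = 1 ∧ P.eval ζ ≠ 0 := by
  by_contra h
  push_neg at h
  have hP0 : P ≠ 0 := fun h0 => by simp [h0, natDegree_zero] at hdeg; omega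
  obtain ⟨ζ, hζ⟩ : ∃ ζ : ℂ, IsPrimitiveRoot ζ (n + 1) :=
    ⟨_, Complex.isPrimitiveRoot_exp (n + 1) (by omega)⟩
  have habs : ‖ζ‖ = 1 := by
    have h1 : ζ ^ (n + 1) = 1 := hζ.pow_eq_one
    have h2 : ‖ζ‖ ^ (n + 1) = 1 := by
      rw [← norm_pow, h1, norm_one]
    refine (pow_left_inj₀ (norm_nonneg ζ) zero_le_one (by omega : n + 1 ≠ 0)).mp ?_
    rw [h2, one_pow]
  have hsub : Finset.image (fun k => ζ ^ k) (Finset.range (n + 1)) ⊆ P.roots.toFinset := by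
    intro x hx
    simp only [Finset.mem_image, Finset.mem_range] at hx
    obtain ⟨k, _, rfl⟩ := hx
    rw [Multiset.mem_toFinset, mem_roots hP0]
    exact h (ζ ^ k) (by rw [norm_pow, habs, one_pow])
  have hcard : n + 1 ≤ P.roots.toFinset.card := by
    have himg : (Finset.image (fun k => ζ ^ k) (Finset.range (n + 1))).card = n + 1 := by
      rw [Finset.card_image_of_injOn (by simpa using hζ.injOn_pow)]
      simp
    rw [← himg]
    exact Finset.card_le_card hsub
  have : P.roots.toFinset.card ≤ n := by
    calc P.roots.toFinset.card ≤ Multiset.card P.roots := P.roots.toFinset_card_le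
      _ ≤ P.natDegree := P.card_roots'
      _ = n := hdeg
  omega
lemma step (n : ℕ) (R : ℂ[X]) (hRdeg : R.natDegree ≤ n) (M : ℝ) (hM : 0 < M)
    (hball : ∀ z : ℂ, ‖z‖ ≤ 1 → ‖R.eval z‖ ≤ M)
    (w : ℂ) (hw : ‖w‖ = 1) (lam : ℂ) (hlam : 1 < ‖lam‖) :
    ‖(derivative R).eval w‖ ≤
      ‖((n : ℂ) * R.eval w - w * (derivative R).eval w) - lam * ((n * M : ℝ) : ℂ)‖ := by
  set F := R - C (lam * (M : ℂ)) with hF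
  have hFd : derivative F = derivative R := by
    rw [hF, derivative_sub, derivative_C, sub_zero]
  have habs : M < ‖lam * (M : ℂ)‖ := by
    rw [norm_mul, Complex.norm_real, Real.norm_eq_abs, abs_of_pos hM]
    nlinarith
  have hFev : ∀ z : ℂ, ‖z‖ ≤ 1 → eval z F ≠ 0 := by
    intro z hz h0
    rw [hF, eval_sub, eval_C, sub_eq_zero] at h0
    have := hball z hz
    rw [h0] at this
    linarith
  have hroots : ∀ a ∈ F.roots, 1 ≤ ‖a‖ := by
    intro a ha
    by_contra hlt
    push_neg at hlt
    have : eval a F = 0 := (mem_roots'.mp ha).2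
    exact hFev a hlt.le this
  have hFdeg : F.natDegree ≤ n := by
    rw [hF]
    refine (natDegree_sub_le _ _).trans ?_
    rw [natDegree_C]
    simp [hRdeg]
  have h := key_ineq n F hFdeg hroots w hw (hFev w hw.le)
  rw [hFd] at h
  have he : (n : ℂ) * eval w F - w * (derivative R).eval w
      = ((n : ℂ) * R.eval w - w * (derivative R).eval w) - lam * ((n * M : ℝ) : ℂ) := by
    rw [hF, eval_sub, eval_C]
    push_cast
    ring
  rw [he] at h
  exact h

lemma choose_lam (c t : ℝ) (B : ℂ) (hc : 0 ≤ c) (ht : 0 < t)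
    (h : ∀ lam : ℂ, 1 < ‖lam‖ → c ≤ ‖B - lam * (t : ℂ)‖) :
    c ≤ |‖B‖ - t| := by
  refine le_of_forall_pos_le_add ?_
  intro ε hε
  set s : ℝ := 1 + ε / t with hs
  have hs1 : 1 < s := by
    have h0 : 0 < ε / t := div_pos hε ht
    rw [hs]
    linarith
  have hkey : c ≤ |‖B‖ - s * t| := by
    rcases eq_or_ne B 0 with rfl | hB
    · have h1 := h (s : ℂ) (by rwa [Complex.norm_real, Real.norm_eq_abs, abs_of_pos (by linarith)])
      have h2 : ‖0 - (s : ℂ) * (t : ℂ)‖ = s * t := by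
        rw [zero_sub, norm_neg, norm_mul, Complex.norm_real, Real.norm_eq_abs, Complex.norm_real, Real.norm_eq_abs,
          abs_of_pos (by linarith), abs_of_pos ht]
      rw [h2] at h1
      have h3 : |‖(0 : ℂ)‖ - s * t| = s * t := by
        rw [norm_zero, zero_sub, abs_neg, abs_of_pos (by positivity)]
      rw [h3]
      exact h1
    · have hBa : 0 < ‖B‖ := norm_pos_iff.mpr hB
      set lam : ℂ := (s / ‖B‖ : ℝ) * B with hlam
      have hlam_abs : ‖lam‖ = s := by
        rw [hlam, norm_mul, Complex.norm_real, Real.norm_eq_abs, abs_of_pos (by positivity)]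
        field_simp
      have h1 := h lam (by rw [hlam_abs]; exact hs1)
      have heq : ‖B - lam * (t : ℂ)‖ = |‖B‖ - s * t| := by
        have e1 : B - lam * (t : ℂ) = ((1 - s * t / ‖B‖ : ℝ) : ℂ) * B := by
          rw [hlam]
          push_cast
          have : (‖B‖ : ℂ) ≠ 0 := by
            exact_mod_cast hBa.ne'
          field_simp
        rw [e1, norm_mul, Complex.norm_real, Real.norm_eq_abs]
        rw [show |1 - s * t / ‖B‖| * ‖B‖
            = |(1 - s * t / ‖B‖) * ‖B‖| from by
          rw [abs_mul, abs_of_pos hBa]]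
        congr 1
        field_simp
      rw [heq] at h1
      exact h1
  have htri : |‖B‖ - s * t| ≤ |‖B‖ - t| + ε := by
    have : ‖B‖ - s * t = (‖B‖ - t) - (s - 1) * t := by ring
    rw [this]
    have h2 : (s - 1) * t = ε := by
      rw [hs]; field_simp; ring
    calc |(‖B‖ - t) - (s - 1) * t| ≤ |‖B‖ - t| + |(s - 1) * t| :=
          abs_sub _ _
      _ = |‖B‖ - t| + ε := by
          rw [h2, abs_of_pos hε]  -- (s-1)*t = ε > 0
  linarith

lemma abs_arith (a b t : ℝ) (ht : 0 < t) (h1 : a ≤ |b - t|) (h2 : b ≤ |a - t|) :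
    a + b ≤ t := by
  rcases abs_cases (b - t) with ⟨e1, l1⟩ | ⟨e1, l1⟩ <;>
    rcases abs_cases (a - t) with ⟨e2, l2⟩ | ⟨e2, l2⟩ <;>
      rw [e1] at h1 <;> rw [e2] at h2 <;> linarith

/-- **Lemma 2 (Govil–Rahman).** If `P` has degree `n ≥ 1` and
`Q(z) = z^n conj(P(1/conj z))`, then `|P'(z)| + |Q'(z)| ≤ n max_{|z|=1} |P(z)|`
on `|z| = 1`. -/
theorem stmt_3 (n : ℕ) (hn : 1 ≤ n) (P Q : Polynomial ℂ) (hdeg : P.natDegree = n)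
    (hQ : Q = Polynomial.reflect n (P.map (starRingEnd ℂ))) :
    ∀ w : ℂ, ‖w‖ = 1 →
      ‖P.derivative.eval w‖ + ‖Q.derivative.eval w‖ ≤
        (n : ℝ) *
          sSup ((fun ζ : ℂ => ‖P.eval ζ‖) '' {ζ : ℂ | ‖ζ‖ = 1}) := by
  intro w hw
  set M : ℝ := sSup ((fun ζ : ℂ => ‖P.eval ζ‖) '' {ζ : ℂ | ‖ζ‖ = 1})
    with hM
  -- the circle as a sphere
  have hSeq : {ζ : ℂ | ‖ζ‖ = 1} = Metric.sphere (0 : ℂ) 1 := by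
    ext ζ
    simp [Complex.dist_eq]
  -- upper bound property
  have hbdd : BddAbove ((fun ζ : ℂ => ‖P.eval ζ‖) '' {ζ : ℂ | ‖ζ‖ = 1}) := by
    rw [hSeq]
    refine IsCompact.bddAbove_image (isCompact_sphere 0 1) ?_
    exact (continuous_norm.comp (P.continuous_aeval.congr (by simp))).continuousOn
  have hub : ∀ ζ : ℂ, ‖ζ‖ = 1 → ‖P.eval ζ‖ ≤ M := by
    intro ζ hζ
    exact le_csSup hbdd ⟨ζ, hζ, rfl⟩
  -- M is positive
  have hMpos : 0 < M := by
    obtain ⟨ζ, hζ1, hζ2⟩ := exists_unimodular_ne_zero P n hdeg hn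
    have h1 : 0 < ‖P.eval ζ‖ := norm_pos_iff.mpr hζ2
    exact h1.trans_le (hub ζ hζ1)
  -- max modulus
  have hPball := maxmod P M hub
  -- facts about Q
  have hQdeg : Q.natDegree ≤ n := by
    rw [hQ, natDegree_le_iff_coeff_eq_zero]
    intro m hm
    rw [coeff_reflect, revAt_eq_self_of_lt hm, coeff_map]
    rw [coeff_eq_zero_of_natDegree_lt (by omega : P.natDegree < m), map_zero]
  have hQcirc : ∀ ζ : ℂ, ‖ζ‖ = 1 → ‖Q.eval ζ‖ ≤ M := by
    intro ζ hζ
    rw [hQ, Q_eval n hn P hdeg ζ hζ, norm_mul, norm_pow, hζ, one_pow, one_mul,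
      Complex.norm_conj]
    exact hub ζ hζ
  have hQball := maxmod Q M hQcirc
  -- B_P and B_Q
  set a : ℝ := ‖P.derivative.eval w‖ with ha
  set b : ℝ := ‖Q.derivative.eval w‖ with hb
  set BP : ℂ := (n : ℂ) * P.eval w - w * (derivative P).eval w with hBP
  set BQ : ℂ := (n : ℂ) * Q.eval w - w * (derivative Q).eval w with hBQ
  have hwn : ‖w‖ ≠ 0 := by rw [hw]; norm_num
  have hBPb : ‖BP‖ = b := by
    rw [hb, hQ, Q_deriv_eval n hn P hdeg w hw, norm_mul, norm_pow, hw, one_pow, one_mul,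
      Complex.norm_conj]
  have hBQa : ‖BQ‖ = a := by
    obtain ⟨N, rfl⟩ : ∃ N, n = N + 1 := ⟨n - 1, by omega⟩
    have hQe : Q.eval w = w ^ (N + 1) * (starRingEnd ℂ) (P.eval w) :=
      hQ ▸ Q_eval (N + 1) hn P hdeg w hw
    have hQd : (derivative Q).eval w =
        w ^ N * (starRingEnd ℂ) (((N + 1 : ℕ) : ℂ) * P.eval w - w * (derivative P).eval w) := by
      have := hQ ▸ Q_deriv_eval (N + 1) hn P hdeg w hw
      simpa using this
    have hBQe : BQ = w ^ N * w * (starRingEnd ℂ) w * (starRingEnd ℂ) ((derivative P).eval w) := by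
      rw [hBQ, hQe, hQd, map_sub, map_mul, map_mul, map_natCast]
      push_cast
      ring
    rw [hBQe, norm_mul, norm_mul, norm_mul, norm_pow, hw, Complex.norm_conj, hw, Complex.norm_conj]
    simp [ha]
  -- apply step to P and Q
  have h1 : ∀ lam : ℂ, 1 < ‖lam‖ →
      a ≤ ‖BP - lam * ((n * M : ℝ) : ℂ)‖ := by
    intro lam hlam
    exact step n P hdeg.le M hMpos hPball w hw lam hlam
  have h2 : ∀ lam : ℂ, 1 < ‖lam‖ →
      b ≤ ‖BQ - lam * ((n * M : ℝ) : ℂ)‖ := by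
    intro lam hlam
    exact step n Q hQdeg M hMpos hQball w hw lam hlam
  have htpos : (0 : ℝ) < n * M := by
    have : (1 : ℝ) ≤ n := by exact_mod_cast hn
    nlinarith
  have c1 : a ≤ |b - n * M| := by
    have := choose_lam a (n * M) BP (norm_nonneg _) htpos h1
    rwa [hBPb] at this
  have c2 : b ≤ |a - n * M| := by
    have := choose_lam b (n * M) BQ (norm_nonneg _) htpos h2
    rwa [hBQa] at this
  have := abs_arith a b (n * M) htpos c1 c2
  linarith
end

section
/- Let P be a complex polynomial of degree n ≥ 1 having all its zeros in the disk |z| < k, where 0 < k ≤ 1. Then for every complex number δ with |δ| ≤ 1, max_{|z|=1} |D_δ P(z)| ≤ n · ((|δ| + k)/(1 + k)) · max_{|z|=1} |P(z)|. -/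
open Polynomial Multiset


lemma eval_deriv_prod_s5 (w : ℂ) : ∀ (R : Multiset ℂ), (∀ z ∈ R, w - z ≠ 0) →
    eval w (derivative (R.map (fun z => X - C z)).prod) =
      eval w ((R.map (fun z => X - C z)).prod) * (R.map (fun z => (w - z)⁻¹)).sum := by
  refine Multiset.induction ?_ ?_
  · simp
  · intro a R ih h
    have ha : w - a ≠ 0 := h a (mem_cons_self a R)
    have hR : ∀ z ∈ R, w - z ≠ 0 := fun z hz => h z (mem_cons_of_mem hz)
    simp only [Multiset.map_cons, Multiset.prod_cons, Multiset.sum_cons, derivative_mul,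
      eval_mul, eval_add, eval_sub, eval_X, eval_C, ih hR]
    rw [derivative_sub, derivative_X, derivative_C]
    simp only [sub_zero, eval_one]
    field_simp

-- log-derivative identity: w * Q'(w) = Q(w) * S where S = Σ w/(w - z) over roots
lemma logderiv_identity (Q : Polynomial ℂ) (w : ℂ) (hne : ∀ z ∈ Q.roots, w - z ≠ 0) :
    w * eval w (derivative Q) =
      eval w Q * ((Q.roots.map (fun z => w / (w - z))).sum) := by
  have hrep := (IsAlgClosed.splits Q).eq_prod_roots
  have h1 : eval w (derivative Q) =
      eval w Q * (Q.roots.map (fun z => (w - z)⁻¹)).sum := by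
    have hd : derivative Q = C Q.leadingCoeff * derivative ((Q.roots.map (fun z => X - C z)).prod) := by
      conv_lhs => rw [hrep]
      rw [derivative_mul, derivative_C, zero_mul, zero_add]
    have he : eval w Q = Q.leadingCoeff * eval w ((Q.roots.map (fun z => X - C z)).prod) := by
      conv_lhs => rw [hrep]
      rw [eval_mul, eval_C]
    rw [hd, he, eval_mul, eval_C, eval_deriv_prod_s5 w _ hne]
    ring
  rw [h1]
  have h2 : (Q.roots.map (fun z => w / (w - z))).sum
      = w * (Q.roots.map (fun z => (w - z)⁻¹)).sum := by
    rw [← Multiset.sum_map_mul_left]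
    simp [div_eq_mul_inv]
  rw [h2]; ring

lemma F_ind (c : ℝ) (hc : 0 ≤ c) :
    ∀ (R : Multiset ℂ), (∀ t ∈ R, c * (t.re^2 + t.im^2) - 2*t.re + 1 ≤ 0) →
      c * ((R.sum).re^2 + (R.sum).im^2) - 2*(R.card : ℝ)*(R.sum).re + (R.card:ℝ)^2 ≤ 0 := by
  refine Multiset.induction ?_ ?_
  · simp
  · intro t R ih h
    have ht := h t (mem_cons_self t R)
    have hR := ih (fun u hu => h u (mem_cons_of_mem hu))
    simp only [Multiset.sum_cons, Multiset.card_cons, Complex.add_re, Complex.add_im]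
    push_cast
    rcases eq_or_ne R 0 with rfl | hR0
    · simpa using ht
    set S := R.sum
    set m : ℝ := (R.card : ℝ) with hmdef
    have hm : 1 ≤ m := by
      have : 1 ≤ R.card := Nat.one_le_iff_ne_zero.2 (by simpa using hR0)
      rw [hmdef]; exact_mod_cast this
    have hm0 : 0 < m := by linarith
    nlinarith [mul_nonneg hc (sq_nonneg (S.re - m * t.re)), mul_nonneg hc (sq_nonneg (S.im - m * t.im)),
      mul_nonneg (mul_nonneg hm0.le hm0.le) (neg_nonneg.2 ht), mul_pos hm0 hm0, hm0]

lemma key_in (k : ℝ) (hk0 : 0 < k) (hk1 : k ≤ 1) (Q : Polynomial ℂ) (hQ : Q ≠ 0)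
    (w : ℂ) (hw : ‖w‖ = 1) (hroots : ∀ z ∈ Q.roots, ‖z‖ < k) :
    ‖(Q.natDegree : ℂ) * eval w Q - w * eval w (derivative Q)‖ ≤
      k * ‖eval w (derivative Q)‖ := by
  have hcard : Q.roots.card = Q.natDegree :=
    (splits_iff_card_roots).1 (IsAlgClosed.splits Q)
  have hne : ∀ z ∈ Q.roots, w - z ≠ 0 := by
    intro z hz
    have h1 : ‖z‖ < 1 := lt_of_lt_of_le (hroots z hz) hk1
    intro h; apply absurd hw; rw [show w = z by linear_combination h]; exact ne_of_lt h1
  set T : Multiset ℂ := Q.roots.map (fun z => w / (w - z)) with hT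
  set S : ℂ := T.sum with hS
  have hid : w * eval w (derivative Q) = eval w Q * S := logderiv_identity Q w hne
  -- per-element condition
  have hper : ∀ t ∈ T, (1 - k^2) * (t.re^2 + t.im^2) - 2*t.re + 1 ≤ 0 := by
    intro t ht
    rw [hT, Multiset.mem_map] at ht
    obtain ⟨z, hz, rfl⟩ := ht
    have hwz := hne z hz
    have hN : 0 < Complex.normSq (w - z) := Complex.normSq_pos.2 hwz
    have h1t : (1 : ℂ) - w / (w - z) = -z / (w - z) := by field_simp; ring
    have e1 : Complex.normSq ((1:ℂ) - w/(w-z)) = Complex.normSq z / Complex.normSq (w-z) := by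
      rw [h1t, Complex.normSq_div, Complex.normSq_neg]
    have e2 : Complex.normSq (w/(w-z)) = 1 / Complex.normSq (w-z) := by
      rw [Complex.normSq_div, ← Complex.sq_norm w, hw]; norm_num
    have hz2 : Complex.normSq z ≤ k^2 := by
      rw [← Complex.sq_norm]
      exact pow_le_pow_left₀ (norm_nonneg z) (hroots z hz).le 2
    set t := w / (w - z)
    have expand : Complex.normSq ((1:ℂ) - t) = 1 - 2*t.re + (t.re^2 + t.im^2) := by
      simp [Complex.normSq_apply, Complex.sub_re, Complex.sub_im, Complex.one_re, Complex.one_im]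
      ring
    have expand2 : Complex.normSq t = t.re^2 + t.im^2 := by
      simp [Complex.normSq_apply]; ring
    have key : Complex.normSq ((1:ℂ) - t) ≤ k^2 * Complex.normSq t := by
      rw [e1, e2]
      rw [div_le_iff₀ hN]
      have : k^2 * (1 / Complex.normSq (w-z)) * Complex.normSq (w-z) = k^2 := by
        field_simp
      rw [this]; exact hz2
    rw [expand, expand2] at key
    nlinarith [key]
  have hF := F_ind (1 - k^2) (by nlinarith) T hper
  have hcardT : (T.card : ℝ) = (Q.natDegree : ℝ) := by
    rw [hT, Multiset.card_map, hcard]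
  rw [hcardT] at hF
  -- normSq bound: normSq (n - S) ≤ k^2 normSq S
  have hnS : Complex.normSq ((Q.natDegree : ℂ) - S) ≤ k^2 * Complex.normSq S := by
    have e : Complex.normSq ((Q.natDegree : ℂ) - S)
        = ((Q.natDegree:ℝ) - S.re)^2 + S.im^2 := by
      simp [Complex.normSq_apply, Complex.sub_re, Complex.sub_im]
      ring
    rw [e]
    have e2 : Complex.normSq S = S.re^2 + S.im^2 := by simp [Complex.normSq_apply]; ring
    rw [e2]; nlinarith [hF]
  have habs : ‖(Q.natDegree : ℂ) - S‖ ≤ k * ‖S‖ := by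
    rw [Complex.norm_def, Complex.norm_def]
    calc Real.sqrt (Complex.normSq ((Q.natDegree:ℂ) - S)) ≤ Real.sqrt (k^2 * Complex.normSq S) :=
          Real.sqrt_le_sqrt hnS
      _ = k * Real.sqrt (Complex.normSq S) := by
          rw [Real.sqrt_mul (sq_nonneg k), Real.sqrt_sq hk0.le]
  calc ‖(Q.natDegree : ℂ) * eval w Q - w * eval w (derivative Q)‖
      = ‖eval w Q * ((Q.natDegree : ℂ) - S)‖ := by rw [hid]; ring_nf
    _ = ‖eval w Q‖ * ‖(Q.natDegree : ℂ) - S‖ := norm_mul _ _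
    _ ≤ ‖eval w Q‖ * (k * ‖S‖) := by
        exact mul_le_mul_of_nonneg_left habs (norm_nonneg _)
    _ = k * (‖eval w Q‖ * ‖S‖) := by ring
    _ = k * ‖eval w Q * S‖ := by rw [norm_mul]
    _ = k * ‖w * eval w (derivative Q)‖ := by rw [hid]
    _ = k * ‖eval w (derivative Q)‖ := by rw [norm_mul, hw, one_mul]

lemma re_sum_le : ∀ (R : Multiset ℂ), (∀ t ∈ R, 2*t.re ≤ 1) →
    2*(R.sum).re ≤ (R.card : ℝ) := by
  refine Multiset.induction ?_ ?_
  · simp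
  · intro t R ih h
    have ht := h t (mem_cons_self t R)
    have hR := ih (fun u hu => h u (mem_cons_of_mem hu))
    simp only [Multiset.sum_cons, Multiset.card_cons, Complex.add_re]
    push_cast
    linarith

lemma key_out (Q : Polynomial ℂ) (w : ℂ) (hw : ‖w‖ = 1)
    (hroots : ∀ z ∈ Q.roots, 1 < ‖z‖) :
    ‖eval w (derivative Q)‖ ≤
      ‖(Q.natDegree : ℂ) * eval w Q - w * eval w (derivative Q)‖ := by
  have hcard : Q.roots.card = Q.natDegree :=
    (splits_iff_card_roots).1 (IsAlgClosed.splits Q)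
  have hne : ∀ z ∈ Q.roots, w - z ≠ 0 := by
    intro z hz h
    have h1 : ‖w‖ < ‖z‖ := hw ▸ hroots z hz
    rw [show w = z by linear_combination h] at h1; exact lt_irrefl _ h1
  set T : Multiset ℂ := Q.roots.map (fun z => w / (w - z)) with hT
  set S : ℂ := T.sum with hS
  have hid : w * eval w (derivative Q) = eval w Q * S := logderiv_identity Q w hne
  have hper : ∀ t ∈ T, 2*t.re ≤ 1 := by
    intro t ht
    rw [hT, Multiset.mem_map] at ht
    obtain ⟨z, hz, rfl⟩ := ht
    have hwz := hne z hz
    have hN : 0 < Complex.normSq (w - z) := Complex.normSq_pos.2 hwz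
    set t := w / (w - z) with htdef
    have h1t : (1 : ℂ) - t = -z / (w - z) := by rw [htdef]; field_simp; ring
    have e1 : Complex.normSq ((1:ℂ) - t) = Complex.normSq z / Complex.normSq (w-z) := by
      rw [h1t, Complex.normSq_div, Complex.normSq_neg]
    have e2 : Complex.normSq t = 1 / Complex.normSq (w-z) := by
      rw [htdef, Complex.normSq_div, ← Complex.sq_norm w, hw]; norm_num
    have hz2 : 1 ≤ Complex.normSq z := by
      rw [← Complex.sq_norm]
      nlinarith [hroots z hz]
    have key : Complex.normSq t ≤ Complex.normSq ((1:ℂ) - t) := by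
      rw [e1, e2]
      gcongr
    have expand : Complex.normSq ((1:ℂ) - t) = 1 - 2*t.re + (t.re^2 + t.im^2) := by
      simp [Complex.normSq_apply, Complex.sub_re, Complex.sub_im]
      ring
    have expand2 : Complex.normSq t = t.re^2 + t.im^2 := by
      simp [Complex.normSq_apply]; ring
    rw [expand, expand2] at key
    linarith
  have hre := re_sum_le T hper
  have hcardT : (T.card : ℝ) = (Q.natDegree : ℝ) := by
    rw [hT, Multiset.card_map, hcard]
  rw [hcardT, ← hS] at hre
  have hnS : Complex.normSq S ≤ Complex.normSq ((Q.natDegree : ℂ) - S) := by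
    have e : Complex.normSq ((Q.natDegree : ℂ) - S)
        = ((Q.natDegree:ℝ) - S.re)^2 + S.im^2 := by
      simp [Complex.normSq_apply, Complex.sub_re, Complex.sub_im]
      ring
    have e2 : Complex.normSq S = S.re^2 + S.im^2 := by simp [Complex.normSq_apply]; ring
    rw [e, e2]
    have hn0 : (0:ℝ) ≤ (Q.natDegree : ℝ) := Nat.cast_nonneg _
    nlinarith
  have habs : ‖S‖ ≤ ‖(Q.natDegree : ℂ) - S‖ := by
    rw [Complex.norm_def, Complex.norm_def]
    exact Real.sqrt_le_sqrt hnS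
  calc ‖eval w (derivative Q)‖
      = ‖w * eval w (derivative Q)‖ := by rw [norm_mul, hw, one_mul]
    _ = ‖eval w Q‖ * ‖S‖ := by rw [hid, norm_mul]
    _ ≤ ‖eval w Q‖ * ‖(Q.natDegree : ℂ) - S‖ :=
        mul_le_mul_of_nonneg_left habs (norm_nonneg _)
    _ = ‖eval w Q * ((Q.natDegree : ℂ) - S)‖ := (norm_mul _ _).symm
    _ = ‖(Q.natDegree : ℂ) * eval w Q - w * eval w (derivative Q)‖ := by
        rw [hid]; ring_nf

/-- If `P` has degree `n ≥ 1` and all its zeros lie in `|z| < k` with `0 < k ≤ 1`, then for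
`|δ| ≤ 1`, `max_{|z|=1} |D_δ P(z)| ≤ n ((|δ| + k)/(1 + k)) max_{|z|=1} |P(z)|`. -/
theorem stmt_5 (n : ℕ) (hn : 1 ≤ n) (P : Polynomial ℂ) (hdeg : P.natDegree = n)
    (k : ℝ) (hk0 : 0 < k) (hk1 : k ≤ 1)
    (hzeros : ∀ w : ℂ, P.eval w = 0 → ‖w‖ < k)
    (δ : ℂ) (hδ : ‖δ‖ ≤ 1) :
    ∀ w : ℂ, ‖w‖ = 1 →
      ‖(n : ℂ) * P.eval w + (δ - w) * P.derivative.eval w‖ ≤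
        (n : ℝ) * ((‖δ‖ + k) / (1 + k)) *
          sSup ((fun ζ : ℂ => ‖P.eval ζ‖) '' {ζ : ℂ | ‖ζ‖ = 1}) := by
  intro w hw
  have hP0 : P ≠ 0 := fun h => by simp [h] at hdeg; omega
  set M : ℝ := sSup ((fun ζ : ℂ => ‖P.eval ζ‖) '' {ζ : ℂ | ‖ζ‖ = 1}) with hM
  have hset : {ζ : ℂ | ‖ζ‖ = 1} = Metric.sphere (0:ℂ) 1 := by
    ext ζ; simp [Metric.mem_sphere, Complex.dist_eq]
  have hbdd : BddAbove ((fun ζ : ℂ => ‖P.eval ζ‖) '' {ζ : ℂ | ‖ζ‖ = 1}) := by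
    rw [hset]
    exact ((isCompact_sphere (0:ℂ) 1).image
      (continuous_norm.comp P.continuous)).bddAbove
  have hM1 : ∀ ζ : ℂ, ‖ζ‖ = 1 → ‖P.eval ζ‖ ≤ M :=
    fun ζ hζ => le_csSup hbdd ⟨ζ, hζ, rfl⟩
  have hM0 : 0 < M := by
    have h1 : P.eval 1 ≠ 0 := by
      intro h
      have := hzeros 1 h
      simp at this; linarith
    calc (0:ℝ) < ‖P.eval 1‖ := norm_pos_iff.2 h1
      _ ≤ M := hM1 1 (by simp)
  -- maximum modulus
  have hmax : ∀ u : ℂ, ‖u‖ ≤ 1 → ‖P.eval u‖ ≤ M := by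
    intro u hu
    have hd : DiffContOnCl ℂ (fun z => P.eval z) (Metric.ball (0:ℂ) 1) :=
      (P.differentiable).diffContOnCl
    have := Complex.norm_le_of_forall_mem_frontier_norm_le (Metric.isBounded_ball) hd
      (C := M) ?_ (z := u) ?_
    · simpa using this
    · intro z hz
      rw [frontier_ball (0:ℂ) one_ne_zero, mem_sphere_zero_iff_norm] at hz
      simpa using hM1 z hz
    · rw [closure_ball (0:ℂ) one_ne_zero, Metric.mem_closedBall, Complex.dist_eq]
      simpa using hu
  set A : ℂ := (n : ℂ) * P.eval w - w * P.derivative.eval w with hA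
  set p : ℝ := ‖P.derivative.eval w‖ with hp
  set a : ℝ := ‖A‖ with ha
  -- (A): a ≤ k p
  have hAk : a ≤ k * p := by
    have hroots : ∀ z ∈ P.roots, ‖z‖ < k := by
      intro z hz
      exact hzeros z ((mem_roots hP0).1 hz)
    have := key_in k hk0 hk1 P hP0 w hw hroots
    rw [hdeg] at this
    exact this
  have hp0 : 0 ≤ p := norm_nonneg _
  have ha0 : 0 ≤ a := norm_nonneg _
  -- (B-core): for M < |μ|, p ≤ |A + n μ|
  have hBcore : ∀ μ : ℂ, M < ‖μ‖ → p ≤ ‖A + (n:ℂ) * μ‖ := by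
    intro μ hμ
    set G : Polynomial ℂ := P + C μ with hG
    have hGd : G.natDegree = n := by rw [hG, natDegree_add_C, hdeg]
    have hG0 : G ≠ 0 := fun h => by simp [h] at hGd; omega
    have hGroots : ∀ z ∈ G.roots, 1 < ‖z‖ := by
      intro z hz
      have hzr : G.eval z = 0 := ((mem_roots hG0).1 hz)
      have hPz : P.eval z = -μ := by
        have : P.eval z + μ = 0 := by simpa [hG] using hzr
        linear_combination this
      by_contra hle
      push_neg at hle
      have := hmax z hle
      rw [hPz, norm_neg] at this
      linarith
    have hout := key_out G w hw hGroots
    rw [hGd] at hout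
    have hGe : G.eval w = P.eval w + μ := by simp [hG]
    have hGde : G.derivative.eval w = P.derivative.eval w := by simp [hG]
    rw [hGe, hGde] at hout
    calc p ≤ ‖(n:ℂ) * (P.eval w + μ) - w * P.derivative.eval w‖ := hout
      _ = ‖A + (n:ℂ)*μ‖ := by rw [hA]; ring_nf
  have hn0 : (0:ℝ) < (n:ℝ) := by exact_mod_cast hn
  -- p ≤ |a - ρ| for all ρ > n M
  have hBρ : ∀ ρ : ℝ, (n:ℝ) * M < ρ → p ≤ |a - ρ| := by
    intro ρ hρ
    have hρ0 : 0 < ρ := lt_of_le_of_lt (by positivity) hρ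
    set u : ℂ := if A = 0 then 1 else A / (a : ℂ) with hu
    have hu1 : ‖u‖ = 1 := by
      rw [hu]
      split_ifs with h
      · simp
      · have ha' : a ≠ 0 := fun h0 => h (by rwa [ha, norm_eq_zero] at h0)
        rw [norm_div, Complex.norm_real, Real.norm_eq_abs, abs_of_nonneg ha0, div_self ha']
    have huA : A = (a : ℂ) * u := by
      rw [hu]
      split_ifs with h
      · simp [h, ha, norm_eq_zero.2 h]
      · have ha' : (a : ℂ) ≠ 0 := by
          simp only [ne_eq, Complex.ofReal_eq_zero]
          exact fun h0 => h (by rwa [ha, norm_eq_zero] at h0)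
        field_simp
    set μ : ℂ := -((ρ / n : ℝ) : ℂ) * u with hμdef
    have hμabs : M < ‖μ‖ := by
      rw [hμdef, norm_mul, norm_neg, Complex.norm_real, Real.norm_eq_abs, hu1, mul_one,
        abs_of_nonneg (by positivity)]
      rw [lt_div_iff₀ hn0]
      linarith [hρ]
    have h1 := hBcore μ hμabs
    have hnC : (n:ℂ) ≠ 0 := Nat.cast_ne_zero.2 (by omega)
    have h2 : A + (n:ℂ) * μ = ((a - ρ : ℝ) : ℂ) * u := by
      rw [huA, hμdef]
      push_cast
      field_simp
      ring
    rw [h2, norm_mul, Complex.norm_real, Real.norm_eq_abs, hu1, mul_one] at h1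
    exact h1
  have hsum : p + a ≤ (n:ℝ) * M := by
    refine le_of_forall_pos_le_add fun ε hε => ?_
    have h := hBρ ((n:ℝ)*M + ε) (by linarith)
    rcases le_or_gt a ((n:ℝ)*M + ε) with hc | hc
    · rw [abs_of_nonpos (by linarith)] at h
      linarith
    · rw [abs_of_pos (by linarith)] at h
      nlinarith
  -- final assembly
  have hLHS : ‖(n : ℂ) * P.eval w + (δ - w) * P.derivative.eval w‖ ≤
      a + ‖δ‖ * p := by
    have : (n : ℂ) * P.eval w + (δ - w) * P.derivative.eval w
        = A + δ * P.derivative.eval w := by rw [hA]; ring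
    rw [this]
    calc ‖A + δ * P.derivative.eval w‖
        ≤ a + ‖δ * P.derivative.eval w‖ := by
          rw [ha]; exact norm_add_le _ _
      _ = a + ‖δ‖ * p := by rw [norm_mul, hp]
  set d : ℝ := ‖δ‖ with hd
  have hd0 : 0 ≤ d := norm_nonneg _
  have hk1' : 0 < 1 + k := by linarith
  refine hLHS.trans ?_
  rw [mul_comm ((n:ℝ)) _, div_mul_eq_mul_div, div_mul_eq_mul_div, le_div_iff₀ hk1']
  nlinarith [mul_nonneg (sub_nonneg.2 hδ) (sub_nonneg.2 hAk), mul_nonneg hd0 hp0,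
    mul_nonneg (sub_nonneg.2 hδ) ha0, mul_nonneg (sub_nonneg.2 hk1) ha0,
    mul_nonneg (sub_nonneg.2 hδ) (mul_nonneg (sub_nonneg.2 hk1) hp0)]
end

section
/- Let P(z) = a_n ∏_{ν=1}^{n} (z − z_ν) be a complex polynomial of degree n ≥ 1 whose zeros satisfy |z_ν| ≥ k_ν ≥ 1 for 1 ≤ ν ≤ n, and let Q(z) = z^n · conj(P(1/conj(z))). Set t₀ = 1 + n / (∑_{ν=1}^{n} 1/(k_ν − 1)) if k_ν > 1 for all ν, and t₀ = 1 if k_ν = 1 for some ν. Then for every complex number α with |α| ≥ 1 and every z with |z| = 1, (1 + t₀) |D_α P(z)| ≤ (|α| + t₀) (|P′(z)| + |Q′(z)|). -/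
open Polynomial Finset

lemma deriv_fin_prod {ι : Type*} [DecidableEq ι] (s : Finset ι) (f : ι → Polynomial ℂ) :
    derivative (∏ i ∈ s, f i) = ∑ i ∈ s, (∏ j ∈ s.erase i, f j) * derivative (f i) := by
  induction s using Finset.induction_on with
  | empty => simp
  | insert a s h ih =>
    rw [Finset.prod_insert h, derivative_mul, Finset.sum_insert h, ih,
      Finset.erase_insert h, Finset.mul_sum]
    congr 1
    · exact mul_comm _ _
    · apply Finset.sum_congr rfl
      intro i hi
      rw [Finset.erase_insert_of_ne (by rintro rfl; exact h hi), Finset.prod_insert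
        (fun hmem => h (Finset.mem_of_mem_erase hmem))]
      ring

lemma cheb {n : ℕ} (s : Fin n → ℝ) (hs : ∀ ν, 0 < s ν) :
    0 ≤ ∑ ν, ((∑ μ, s μ) - n * s ν) / (2 * s ν + 1) := by
  have key : ∀ ν : Fin n, ((∑ μ, s μ) - n * s ν) / (2 * s ν + 1)
      = ∑ μ, (s μ - s ν) / (2 * s ν + 1) := by
    intro ν
    rw [← Finset.sum_div, Finset.sum_sub_distrib, Finset.sum_const, Finset.card_univ,
      Fintype.card_fin, nsmul_eq_mul]
  simp_rw [key]
  have h2 : (0:ℝ) ≤ ∑ ν : Fin n, ∑ μ : Fin n,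
      ((s μ - s ν) / (2 * s ν + 1) + (s ν - s μ) / (2 * s μ + 1)) := by
    apply Finset.sum_nonneg; intro ν _; apply Finset.sum_nonneg; intro μ _
    have h1 : (0:ℝ) < 2 * s ν + 1 := by have := hs ν; linarith
    have h1' : (0:ℝ) < 2 * s μ + 1 := by have := hs μ; linarith
    rw [div_add_div _ _ (ne_of_gt h1) (ne_of_gt h1')]
    apply div_nonneg
    · nlinarith [sq_nonneg (s μ - s ν)]
    · positivity
  have h3 : ∑ ν : Fin n, ∑ μ : Fin n,
      ((s μ - s ν) / (2 * s ν + 1) + (s ν - s μ) / (2 * s μ + 1))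
      = (∑ ν : Fin n, ∑ μ : Fin n, (s μ - s ν) / (2 * s ν + 1))
        + ∑ ν : Fin n, ∑ μ : Fin n, (s ν - s μ) / (2 * s μ + 1) := by
    rw [← Finset.sum_add_distrib]
    exact Finset.sum_congr rfl fun ν _ => Finset.sum_add_distrib
  have h4 : ∑ ν : Fin n, ∑ μ : Fin n, (s ν - s μ) / (2 * s μ + 1)
      = ∑ ν : Fin n, ∑ μ : Fin n, (s μ - s ν) / (2 * s ν + 1) := Finset.sum_comm
  rw [h3, h4] at h2
  linarith

-- square-comparison helper
-- Re bound: |w| = 1, |z| ≥ 1 ⇒ Re (w/(w-z)) ≤ 1/2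
lemma re_bound (w z : ℂ) (hw : ‖w‖ = 1) (hz : 1 ≤ ‖z‖)
    (hd : w - z ≠ 0) : (w / (w - z)).re ≤ 1/2 := by
  have hns : 0 < Complex.normSq (w - z) := Complex.normSq_pos.mpr hd
  have hw2 : w.re^2 + w.im^2 = 1 := by
    have := Complex.sq_norm w
    rw [hw] at this
    simp [Complex.normSq_apply] at this
    nlinarith [this]
  have hz2 : 1 ≤ z.re^2 + z.im^2 := by
    have h1 := Complex.sq_norm z
    have h2 : (1:ℝ) ≤ ‖z‖ ^ 2 := one_le_pow₀ hz
    rw [h1] at h2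
    simpa [Complex.normSq_apply, sq] using h2
  rw [Complex.div_re]
  rw [← add_div, div_le_iff₀ hns]
  simp only [Complex.normSq_apply, Complex.sub_re, Complex.sub_im]
  nlinarith

lemma disk_eq (w z : ℂ) (hw : ‖w‖ = 1) (hr : 1 < ‖z‖)
    (hd : w - z ≠ 0) :
    ‖w/(w-z) + ((1/((‖z‖)^2-1) : ℝ) : ℂ)‖
      = ‖z‖ / ((‖z‖)^2 - 1) := by
  set r : ℝ := ‖z‖ with hrdef
  have hr0 : (0:ℝ) < r := lt_trans one_pos hr
  have hr1 : r^2 - 1 ≠ 0 := by nlinarith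
  have hd1 : ((r^2-1 : ℝ) : ℂ) ≠ 0 := by exact_mod_cast hr1
  have hw2 : w.re^2 + w.im^2 = 1 := by
    have := Complex.sq_norm w
    rw [hw] at this
    simp [Complex.normSq_apply] at this
    nlinarith [this]
  have hz2 : z.re^2 + z.im^2 = r^2 := by
    have := Complex.sq_norm z
    rw [← hrdef] at this
    simp [Complex.normSq_apply] at this
    nlinarith [this]
  have hfield : w/(w-z) + ((1/(r^2-1) : ℝ) : ℂ)
      = (w * ((r^2 : ℝ) : ℂ) - z)/((w-z) * (((r^2-1 : ℝ)) : ℂ)) := by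
    have hc1 : ((1/(r^2-1) : ℝ) : ℂ) = 1/(((r^2-1:ℝ)):ℂ) := by push_cast; ring
    have hc2 : ((r^2 : ℝ) : ℂ) = ((r^2-1 : ℝ):ℂ) + 1 := by push_cast; ring
    rw [hc1, hc2, div_add_div _ _ hd hd1]
    congr 1
    ring
  have hnsq : Complex.normSq (w * ((r^2 : ℝ) : ℂ) - z) = r^2 * Complex.normSq (w - z) := by
    simp only [Complex.normSq_apply, Complex.sub_re, Complex.sub_im, Complex.mul_re,
      Complex.mul_im, Complex.ofReal_re, Complex.ofReal_im]
    linear_combination (r^4 - r^2) * hw2 + (1 - r^2) * hz2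
  have habs : ‖w * ((r^2 : ℝ) : ℂ) - z‖ = r * ‖w - z‖ := by
    rw [Complex.norm_def, Complex.norm_def, hnsq, Real.sqrt_mul (by positivity),
      Real.sqrt_sq hr0.le]
  rw [hfield, norm_div, norm_mul, habs, Complex.norm_real, Real.norm_eq_abs,
    abs_of_pos (by nlinarith : (0:ℝ) < r^2 - 1), mul_comm r,
    mul_div_mul_left _ _ (norm_ne_zero_iff.mpr hd)]

lemma sq_abs' (u : ℂ) : (‖u‖)^2 = u.re^2 + u.im^2 := by
  have h := Complex.sq_norm u
  rw [Complex.normSq_apply] at h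
  linear_combination h

lemma abs_le_abs_of_sq {x y : ℝ} (hy : 0 ≤ y) (h : x^2 ≤ y^2) : x ≤ y := by
  nlinarith [abs_nonneg x, le_abs_self x, sq_abs x]

-- geometric step: |s - C| ≤ R with (t²-1)C = -n, (t²-1)(C²-R²) = -n², t > 1 implies t|s| ≤ |n-s|
lemma geom_step (s : ℂ) (n C R t : ℝ) (ht : 1 < t)
    (h1 : (t^2 - 1) * C = -n) (h2 : (t^2 - 1) * (C^2 - R^2) = -n^2)
    (h3 : ‖s - (C:ℂ)‖ ≤ R) :
    t * ‖s‖ ≤ ‖(n:ℝ) - s‖ := by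
  have hsq : (s - (C:ℂ)).re^2 + (s - (C:ℂ)).im^2 ≤ R^2 := by
    have := pow_le_pow_left₀ (norm_nonneg _) h3 2
    rw [sq_abs'] at this
    linarith
  simp only [Complex.sub_re, Complex.sub_im, Complex.ofReal_re, Complex.ofReal_im,
    sub_zero] at hsq
  apply abs_le_abs_of_sq (norm_nonneg _)
  rw [mul_pow, sq_abs', sq_abs']
  simp only [Complex.sub_re, Complex.sub_im, Complex.ofReal_re, Complex.ofReal_im, zero_sub,
    neg_sq]
  have ht2 : (0:ℝ) ≤ t^2 - 1 := by nlinarith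
  have hA := mul_le_mul_of_nonneg_left hsq ht2
  have hB : (t^2 - 1) * C * s.re = -n * s.re := by rw [h1]
  nlinarith [hA, hB, h2]

lemma qder (n : ℕ) (hn : 1 ≤ n) (P : Polynomial ℂ) (hdeg : P.natDegree ≤ n) (w : ℂ)
    (hw : w * (starRingEnd ℂ) w = 1) :
    (Polynomial.reflect n (P.map (starRingEnd ℂ))).derivative.eval w =
      w ^ (n - 1) * (starRingEnd ℂ) ((n:ℂ) * P.eval w - w * P.derivative.eval w) := by
  set c := starRingEnd ℂ with hc
  set q := P.map c with hq
  have hqdeg : q.natDegree ≤ n := le_trans (natDegree_map_le) hdeg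
  have hQdeg : (reflect n q).natDegree ≤ n := by
    rw [natDegree_le_iff_coeff_eq_zero]
    intro N hN
    rw [coeff_reflect, revAt_eq_self_of_lt hN]
    exact coeff_eq_zero_of_natDegree_lt (lt_of_le_of_lt hqdeg hN)
  have hdQ : (reflect n q).derivative.natDegree < n :=
    lt_of_le_of_lt (natDegree_derivative_le _) (by omega)
  have hdP : P.derivative.natDegree < n := lt_of_le_of_lt (natDegree_derivative_le _) (by omega)
  -- LHS
  rw [eval_eq_sum_range' hdQ]
  have hL : ∀ i ∈ Finset.range n,
      (reflect n q).derivative.coeff i * w ^ i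
        = ((i:ℂ)+1) * c (P.coeff (n-1-i)) * w ^ i := by
    intro i hi
    rw [Finset.mem_range] at hi
    rw [coeff_derivative, coeff_reflect, revAt_le (by omega : i+1 ≤ n), hq, coeff_map]
    have : n - (i+1) = n - 1 - i := by omega
    rw [this]; push_cast; ring
  rw [Finset.sum_congr rfl hL]
  -- RHS
  have hPe : (n:ℂ) * P.eval w - w * P.derivative.eval w
      = ∑ j ∈ Finset.range n, ((n:ℂ) - j) * P.coeff j * w ^ j := by
    rw [eval_eq_sum_range' (lt_of_le_of_lt hdeg (Nat.lt_succ_self n)),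
      eval_eq_sum_range' hdP, Finset.mul_sum, Finset.mul_sum]
    have h1 : ∑ j ∈ Finset.range n, w * (P.derivative.coeff j * w ^ j)
        = ∑ j ∈ Finset.range (n+1), (j:ℂ) * P.coeff j * w ^ j := by
      rw [Finset.sum_range_succ' (fun j => (j:ℂ) * P.coeff j * w ^ j) n]
      simp only [Nat.cast_zero, zero_mul, mul_zero, add_zero, pow_zero, mul_one]
      apply Finset.sum_congr rfl
      intro j _
      rw [coeff_derivative]
      push_cast; ring
    rw [h1, ← Finset.sum_sub_distrib]
    rw [Finset.sum_range_succ]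
    rw [show ((n:ℂ) * (P.coeff n * w ^ n) - (n:ℂ) * P.coeff n * w ^ n) = 0 by ring, add_zero]
    apply Finset.sum_congr rfl
    intro j _; ring
  rw [hPe, map_sum, Finset.mul_sum]
  rw [← Finset.sum_range_reflect (fun j => w ^ (n-1) * c (((n:ℂ) - j) * P.coeff j * w ^ j)) n]
  apply Finset.sum_congr rfl
  intro i hi
  rw [Finset.mem_range] at hi
  simp only [map_mul, map_sub, map_natCast, map_pow]
  have h2 : ((n:ℂ) - ((n-1-i : ℕ):ℂ)) = (i:ℂ)+1 := by
    rw [Nat.cast_sub (by omega : i ≤ n - 1), Nat.cast_sub (by omega : 1 ≤ n)]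
    push_cast; ring
  rw [h2]
  have h3 : w ^ (n-1) * (c w) ^ (n-1-i) = w ^ i := by
    have hsplit : w ^ (n-1) = w ^ i * w ^ (n-1-i) := by
      rw [← pow_add]; congr 1; omega
    rw [hsplit, mul_assoc, ← mul_pow, hw, one_pow, mul_one]
  linear_combination (-(((i:ℂ)+1) * c (P.coeff (n-1-i)))) * h3

set_option maxHeartbeats 2000000 in
lemma keylem (n : ℕ) (hn : 1 ≤ n) (a : ℂ) (ha : a ≠ 0) (z : Fin n → ℂ)
    (P : Polynomial ℂ)
    (hP : P = Polynomial.C a * ∏ ν, (Polynomial.X - Polynomial.C (z ν)))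
    (k : Fin n → ℝ) (hk1 : ∀ ν, 1 ≤ k ν) (hzk : ∀ ν, k ν ≤ ‖z ν‖)
    (t₀ : ℝ)
    (ht₀ : (∀ ν, 1 < k ν) → t₀ = 1 + (n : ℝ) / ∑ ν, 1 / (k ν - 1))
    (ht₀' : (∃ ν, k ν = 1) → t₀ = 1)
    (w : ℂ) (hw : ‖w‖ = 1) :
    t₀ * ‖P.derivative.eval w‖
      ≤ ‖(n:ℂ) * P.eval w - w * P.derivative.eval w‖ := by
  haveI : Nonempty (Fin n) := Fin.pos_iff_nonempty.mp hn
  have evalP : P.eval w = a * ∏ ν, (w - z ν) := by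
    simp [hP, eval_prod]
  have hder : P.derivative = Polynomial.C a * ∑ ν, ∏ μ ∈ univ.erase ν, (X - Polynomial.C (z μ)) := by
    rw [hP, derivative_C_mul, deriv_fin_prod]
    congr 1
    apply Finset.sum_congr rfl
    intro ν _
    simp
  have evalP' : P.derivative.eval w = a * ∑ ν, ∏ μ ∈ univ.erase ν, (w - z μ) := by
    simp [hder, eval_prod, eval_finset_sum]
  by_cases hPw : P.eval w = 0
  · -- w is a zero of P on the unit circle
    rw [evalP] at hPw
    have hprod : ∏ ν, (w - z ν) = 0 := by
      rcases mul_eq_zero.mp hPw with h | h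
      · exact absurd h ha
      · exact h
    obtain ⟨ν, -, hν⟩ := Finset.prod_eq_zero_iff.mp hprod
    have hzν : z ν = w := by linear_combination -hν
    have hkν : k ν = 1 := le_antisymm (by rw [← hw, ← hzν]; exact hzk ν) (hk1 ν)
    rw [ht₀' ⟨ν, hkν⟩, evalP, hPw, mul_zero, zero_sub, one_mul, norm_neg, norm_mul, hw,
      one_mul]
  · have hfac : ∀ ν, w - z ν ≠ 0 := by
      intro ν h
      apply hPw
      rw [evalP]
      exact mul_eq_zero_of_right a (Finset.prod_eq_zero (Finset.mem_univ ν) h)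
    set g : Fin n → ℂ := fun ν => w / (w - z ν) with hg
    set s : ℂ := ∑ ν, g ν with hs
    have ident1 : w * P.derivative.eval w = P.eval w * s := by
      rw [evalP, evalP', hs, Finset.mul_sum, Finset.mul_sum, Finset.mul_sum]
      apply Finset.sum_congr rfl
      intro ν _
      rw [← Finset.mul_prod_erase univ _ (Finset.mem_univ ν)]
      rw [hg]
      field_simp [hfac ν]
    have ident2 : (n:ℂ) * P.eval w - w * P.derivative.eval w = P.eval w * ((n:ℂ) - s) := by
      rw [ident1]; ring
    have habsP' : ‖P.derivative.eval w‖ = ‖P.eval w‖ * ‖s‖ := by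
      have := congrArg norm ident1
      rwa [norm_mul, norm_mul, hw, one_mul] at this
    have ht01 : 1 ≤ t₀ := by
      by_cases hall : ∀ ν, 1 < k ν
      · rw [ht₀ hall]
        have hS : 0 < ∑ ν, 1 / (k ν - 1) :=
          Finset.sum_pos (fun ν _ => one_div_pos.mpr (by have := hall ν; linarith)) univ_nonempty
        have : (0:ℝ) ≤ (n:ℝ) / ∑ ν, 1 / (k ν - 1) := by positivity
        linarith
      · push_neg at hall
        obtain ⟨ν, hν⟩ := hall
        exact le_of_eq (ht₀' ⟨ν, le_antisymm hν (hk1 ν)⟩).symm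
    suffices hkey : t₀ * ‖s‖ ≤ ‖(n:ℂ) - s‖ by
      rw [habsP', ident2, norm_mul, ← mul_assoc, mul_comm t₀, mul_assoc]
      exact mul_le_mul_of_nonneg_left hkey (norm_nonneg _)
    by_cases hall : ∀ ν, 1 < k ν
    · -- all zeros strictly outside unit circle
      have hkr : ∀ ν, 1 < ‖z ν‖ := fun ν => lt_of_lt_of_le (hall ν) (hzk ν)
      obtain ⟨r, hr⟩ : ∃ r : Fin n → ℝ, r = fun ν => ‖z ν‖ := ⟨_, rfl⟩
      obtain ⟨S, hS⟩ : ∃ S : ℝ, S = ∑ ν, 1 / (k ν - 1) := ⟨_, rfl⟩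
      have hSpos : 0 < S := hS ▸
        Finset.sum_pos (fun ν _ => one_div_pos.mpr (by have := hall ν; linarith)) univ_nonempty
      have hn1 : (1:ℝ) ≤ (n:ℝ) := by exact_mod_cast hn
      have hT : (0:ℝ) < 2*S + n := by linarith
      obtain ⟨C, hC⟩ : ∃ C : ℝ, C = -(S^2/(2*S+n)) := ⟨_, rfl⟩
      obtain ⟨R, hR⟩ : ∃ R : ℝ, R = (1 + n/S) * S^2/(2*S+n) := ⟨_, rfl⟩
      have ht0eq : t₀ = 1 + n/S := by rw [ht₀ hall, hS]
      have hrpos : ∀ ν, (0:ℝ) < (r ν)^2 - 1 := fun ν => by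
        have := hkr ν; rw [hr]; simp only []; nlinarith
      have hdisk : ∀ ν, ‖g ν - ((-(1/((r ν)^2 - 1)) : ℝ) : ℂ)‖ = r ν / ((r ν)^2 - 1) := by
        intro ν
        have h := disk_eq w (z ν) hw (hkr ν) (hfac ν)
        rw [Complex.ofReal_neg, sub_neg_eq_add, hr]
        exact h
      obtain ⟨csum, hcsum⟩ : ∃ c : ℝ, c = ∑ ν, -(1/((r ν)^2 - 1)) := ⟨_, rfl⟩
      obtain ⟨ρ, hρ⟩ : ∃ p : ℝ, p = ∑ ν, r ν / ((r ν)^2 - 1) := ⟨_, rfl⟩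
      have hdecomp : s - ((C:ℝ):ℂ)
          = (∑ ν, (g ν - ((-(1/((r ν)^2-1)) : ℝ):ℂ))) + (((csum - C : ℝ)):ℂ) := by
        rw [hs, hcsum]
        push_cast
        rw [Finset.sum_sub_distrib]
        ring
      have htri : ‖s - ((C:ℝ):ℂ)‖ ≤ ρ + |csum - C| := by
        rw [hdecomp]
        refine le_trans (norm_add_le _ _) (add_le_add ?_ ?_)
        · refine le_trans (norm_sum_le _ _) ?_
          rw [hρ]
          exact le_of_eq (Finset.sum_congr rfl fun ν _ => hdisk ν)
        · rw [Complex.norm_real, Real.norm_eq_abs]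
      -- right endpoint
      have hsum1 : csum + ρ = ∑ ν, 1/(r ν + 1) := by
        rw [hcsum, hρ, ← Finset.sum_add_distrib]
        apply Finset.sum_congr rfl
        intro ν _
        have h1 := hrpos ν
        have h2 : (0:ℝ) < r ν + 1 := by have := hkr ν; rw [hr]; linarith
        field_simp
        ring
      have hsum2 : ∑ ν, 1/(r ν + 1) ≤ ∑ ν, 1/(k ν + 1) := by
        apply Finset.sum_le_sum
        intro ν _
        apply one_div_le_one_div_of_le (by have := hk1 ν; linarith)
        have := hzk ν; rw [hr]; linarith
      have hkid : ∀ ν : Fin n, 1/(k ν + 1) = (1/(k ν - 1))/(2*(1/(k ν - 1)) + 1) := by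
        intro ν
        have h1 : k ν - 1 ≠ 0 := by have := hall ν; intro h; nlinarith
        have h2 : (1:ℝ) + k ν ≠ 0 := by have := hall ν; intro h; nlinarith
        field_simp
        ring
      have hcheb0 := cheb (fun ν => 1/(k ν - 1))
        (fun ν => one_div_pos.mpr (by have := hall ν; linarith))
      have hid : (n:ℝ)*S/(2*S+n) - ∑ ν, (1/(k ν - 1))/(2*(1/(k ν - 1)) + 1)
          = (∑ ν, (S - n*(1/(k ν - 1)))/(2*(1/(k ν - 1)) + 1))/(2*S+n) := by
        rw [Finset.sum_div]
        have hconst : (n:ℝ)*S/(2*S+n) = ∑ _ν : Fin n, S/(2*S+n) := by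
          rw [Finset.sum_const, Finset.card_univ, Fintype.card_fin, nsmul_eq_mul]
          ring
        rw [hconst, ← Finset.sum_sub_distrib]
        apply Finset.sum_congr rfl
        intro ν _
        have h1 : (0:ℝ) < k ν - 1 := by have := hall ν; linarith
        have h3 : (0:ℝ) < 2*(1/(k ν - 1)) + 1 := by positivity
        field_simp
        ring
      have hcheb : ∑ ν, 1/(k ν + 1) ≤ (n:ℝ)*S/(2*S+n) := by
        have hcheb0' : (0:ℝ) ≤ ∑ ν, (S - n*(1/(k ν - 1)))/(2*(1/(k ν - 1)) + 1) := by
          rw [hS]; simpa using hcheb0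
        have h4 : (0:ℝ) ≤ (∑ ν, (S - n*(1/(k ν - 1)))/(2*(1/(k ν - 1)) + 1))/(2*S+n) :=
          div_nonneg hcheb0' hT.le
        have h5 := hid
        simp_rw [hkid]
        linarith
      have hCR : C + R = (n:ℝ)*S/(2*S+n) := by
        rw [hC, hR]
        field_simp
        ring
      have hrineq1 : csum + ρ ≤ C + R := by
        rw [hCR, hsum1]
        exact le_trans hsum2 hcheb
      -- left endpoint
      have hsum3 : csum - ρ = -∑ ν, 1/(r ν - 1) := by
        rw [hcsum, hρ, ← Finset.sum_sub_distrib, ← Finset.sum_neg_distrib]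
        apply Finset.sum_congr rfl
        intro ν _
        have h1 := hrpos ν
        have h2 : (0:ℝ) < r ν - 1 := by have := hkr ν; rw [hr]; linarith
        field_simp
        ring
      have hsum4 : ∑ ν, 1/(r ν - 1) ≤ S := by
        rw [hS]
        apply Finset.sum_le_sum
        intro ν _
        apply one_div_le_one_div_of_le (by have := hall ν; linarith)
        have := hzk ν; rw [hr]; linarith
      have hCR2 : C - R = -S := by
        rw [hC, hR]
        field_simp
        ring
      have hrineq2 : C - R ≤ csum - ρ := by
        rw [hCR2, hsum3]
        linarith
      have habs_c : |csum - C| ≤ R - ρ := abs_le.mpr ⟨by linarith, by linarith⟩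
      have hfin : ‖s - ((C:ℝ):ℂ)‖ ≤ R := by linarith
      have ht1 : (1:ℝ) < 1 + n/S := by
        have : (0:ℝ) < (n:ℝ)/S := div_pos (by linarith) hSpos
        linarith
      have hSne : S ≠ 0 := ne_of_gt hSpos
      have hTne : 2*S + (n:ℝ) ≠ 0 := ne_of_gt hT
      have hrel1 : ((1 + (n:ℝ)/S)^2 - 1)*C = -(n:ℝ) := by
        rw [hC]; field_simp; ring
      have hrel2 : ((1 + (n:ℝ)/S)^2 - 1)*(C^2 - R^2) = -(n:ℝ)^2 := by
        rw [hC, hR]; field_simp; ring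
      have hgeom := geom_step s n C R (1 + (n:ℝ)/S) ht1 hrel1 hrel2 hfin
      rw [ht0eq, ← Complex.ofReal_natCast]
      exact hgeom
    · -- some k ν = 1 : t₀ = 1
      push_neg at hall
      obtain ⟨ν₀, hν₀⟩ := hall
      rw [ht₀' ⟨ν₀, le_antisymm hν₀ (hk1 ν₀)⟩, one_mul]
      have hre : s.re ≤ n / 2 := by
        rw [hs, Complex.re_sum]
        calc ∑ ν, (g ν).re ≤ ∑ ν : Fin n, (1:ℝ)/2 :=
              Finset.sum_le_sum fun ν _ =>
                re_bound w (z ν) hw (le_trans (hk1 ν) (hzk ν)) (hfac ν)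
          _ = n / 2 := by simp [Finset.sum_const]; ring
      apply abs_le_abs_of_sq (norm_nonneg _)
      rw [sq_abs', sq_abs']
      have h1 : ((n:ℂ) - s).re = (n:ℝ) - s.re := by simp
      have h2 : ((n:ℂ) - s).im = -s.im := by simp
      rw [h1, h2]
      have hn' : (1:ℝ) ≤ (n:ℝ) := by exact_mod_cast hn
      nlinarith [hre, hn']

/-- If `P(z) = a ∏ (z - z_ν)` has degree `n ≥ 1` with `|z_ν| ≥ k_ν ≥ 1`, and
`Q(z) = z^n conj(P(1/conj z))`, then with `t₀` as defined, for `|α| ≥ 1` and `|z| = 1`,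
`(1 + t₀)|D_α P(z)| ≤ (|α| + t₀)(|P'(z)| + |Q'(z)|)`. -/
theorem stmt_9 (n : ℕ) (hn : 1 ≤ n) (a : ℂ) (ha : a ≠ 0) (z : Fin n → ℂ)
    (P Q : Polynomial ℂ)
    (hP : P = Polynomial.C a * ∏ ν, (Polynomial.X - Polynomial.C (z ν)))
    (hQ : Q = Polynomial.reflect n (P.map (starRingEnd ℂ)))
    (k : Fin n → ℝ) (hk1 : ∀ ν, 1 ≤ k ν) (hzk : ∀ ν, k ν ≤ ‖z ν‖)
    (t₀ : ℝ)
    (ht₀ : (∀ ν, 1 < k ν) → t₀ = 1 + (n : ℝ) / ∑ ν, 1 / (k ν - 1))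
    (ht₀' : (∃ ν, k ν = 1) → t₀ = 1)
    (α : ℂ) (hα : 1 ≤ ‖α‖) :
    ∀ w : ℂ, ‖w‖ = 1 →
      (1 + t₀) * ‖(n : ℂ) * P.eval w + (α - w) * P.derivative.eval w‖ ≤
        (‖α‖ + t₀) *
          (‖P.derivative.eval w‖ + ‖Q.derivative.eval w‖) := by
  intro w hw
  haveI : Nonempty (Fin n) := Fin.pos_iff_nonempty.mp hn
  have hdeg : P.natDegree ≤ n := by
    rw [hP]
    refine le_trans (natDegree_C_mul_le _ _) (le_trans (natDegree_prod_le _ _) ?_)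
    simp [natDegree_X_sub_C]
  have hwc : w * (starRingEnd ℂ) w = 1 := by
    rw [Complex.mul_conj, Complex.normSq_eq_norm_sq, hw]
    norm_num
  have hQd := qder n hn P hdeg w hwc
  have hQabs : ‖Q.derivative.eval w‖
      = ‖(n:ℂ) * P.eval w - w * P.derivative.eval w‖ := by
    rw [hQ, hQd, norm_mul, norm_pow, hw, one_pow, one_mul, Complex.norm_conj]
  have hkeyP := keylem n hn a ha z P hP k hk1 hzk t₀ ht₀ ht₀' w hw
  have ht01 : 1 ≤ t₀ := by
    by_cases hall : ∀ ν, 1 < k ν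
    · rw [ht₀ hall]
      have hS : 0 < ∑ ν, 1 / (k ν - 1) :=
        Finset.sum_pos (fun ν _ => one_div_pos.mpr (by have := hall ν; linarith))
          Finset.univ_nonempty
      have : (0:ℝ) ≤ (n:ℝ) / ∑ ν, 1 / (k ν - 1) := by positivity
      linarith
    · push_neg at hall
      obtain ⟨ν, hν⟩ := hall
      exact le_of_eq (ht₀' ⟨ν, le_antisymm hν (hk1 ν)⟩).symm
  have hD : (n:ℂ) * P.eval w + (α - w) * P.derivative.eval w
      = ((n:ℂ) * P.eval w - w * P.derivative.eval w) + α * P.derivative.eval w := by ring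
  have habsD : ‖(n:ℂ) * P.eval w + (α - w) * P.derivative.eval w‖
      ≤ ‖(n:ℂ) * P.eval w - w * P.derivative.eval w‖
        + ‖α‖ * ‖P.derivative.eval w‖ := by
    rw [hD, ← norm_mul]
    exact norm_add_le _ _
  rw [hQabs]
  have hpnn : 0 ≤ ‖P.derivative.eval w‖ := norm_nonneg _
  have h1 : (1 + t₀) * ‖(n:ℂ) * P.eval w + (α - w) * P.derivative.eval w‖
      ≤ (1 + t₀) * (‖(n:ℂ) * P.eval w - w * P.derivative.eval w‖
        + ‖α‖ * ‖P.derivative.eval w‖) :=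
    mul_le_mul_of_nonneg_left habsD (by linarith)
  have h2 : 0 ≤ (‖α‖ - 1) * (‖(n:ℂ) * P.eval w
      - w * P.derivative.eval w‖ - t₀ * ‖P.derivative.eval w‖) :=
    mul_nonneg (by linarith) (by linarith)
  nlinarith [h1, h2]
end
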